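/- arXiv:2111.08579 — 3 statements merged into one kernel-verified Lean document; each statement's English description precedes it below -/
import Mathlib

section
/- For every X in the Orlicz heart H^{Φ*}, the divergence risk measure satisfies the optimized-certainty-equivalent representation ρ^Φ(X) = inf_{x∈ℝ} E[Φ*(X + x) − x]. -/
open MeasureTheory Filter Topology Set
open scoped ENNReal NNReal

noncomputable section

/-- The Fenchel–Legendre transform `Φ*` of `Φ`, as a real-valued function on `ℝ`:
`Φ*(y) = sup_{x ≥ 0} (x * y - Φ(x))` (points where `Φ x = ∞` contribute `-∞` and are
therefore omitted from the supremum). -/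
def legendre (Φ : ℝ → ℝ≥0∞) (y : ℝ) : ℝ :=
  sSup {s : ℝ | ∃ x : ℝ, 0 ≤ x ∧ Φ x ≠ ⊤ ∧ s = x * y - (Φ x).toReal}

/-- Standing assumptions on `Φ : [0,∞) → [0,∞]`: lower semicontinuity, convexity,
`Φ(0) < ∞`, `Φ(x₀) < ∞` for some `x₀ > 1`, `inf_{x ≥ 0} Φ(x) = 0`, and the superlinear
growth condition `Φ(x)/x → ∞`. -/
structure PhiAssumptions (Φ : ℝ → ℝ≥0∞) : Prop where
  lsc : LowerSemicontinuousOn Φ (Set.Ici 0)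
  convex : ∀ x ∈ Set.Ici (0:ℝ), ∀ y ∈ Set.Ici (0:ℝ), ∀ u v : ℝ, 0 ≤ u → 0 ≤ v →
    u + v = 1 → Φ (u * x + v * y) ≤ ENNReal.ofReal u * Φ x + ENNReal.ofReal v * Φ y
  finite_zero : Φ 0 ≠ ⊤
  finite_gt_one : ∃ x₀ : ℝ, 1 < x₀ ∧ Φ x₀ ≠ ⊤
  inf_eq_zero : (⨅ x : {x : ℝ // 0 ≤ x}, Φ x.1) = 0
  superlinear : Tendsto (fun x : ℝ => Φ x / ENNReal.ofReal x) atTop (𝓝 ⊤)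

/-- The divergence risk measure `ρ^Φ(X) = sup_{ℙ̄ ∈ 𝒫_Φ} (E_{ℙ̄}[X] - E[Φ(dℙ̄/dℙ)])`,
where `𝒫_Φ` is the set of probability measures absolutely continuous w.r.t. `P` whose
density has `P`-integrable `Φ`-divergence. -/
def divergenceRisk {Ω : Type*} [MeasurableSpace Ω] (P : Measure Ω) (Φ : ℝ → ℝ≥0∞)
    (X : Ω → ℝ) : ℝ :=
  sSup {s : ℝ | ∃ Q : Measure Ω, IsProbabilityMeasure Q ∧ Q ≪ P ∧
    (∫⁻ ω, Φ ((Q.rnDeriv P ω).toReal) ∂P) ≠ ⊤ ∧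
    s = (∫ ω, X ω ∂Q) - (∫⁻ ω, Φ ((Q.rnDeriv P ω).toReal) ∂P).toReal}

namespace OCE

def lset (Φ : ℝ → ℝ≥0∞) (y : ℝ) : Set ℝ :=
  {s : ℝ | ∃ x : ℝ, 0 ≤ x ∧ Φ x ≠ ⊤ ∧ s = x * y - (Φ x).toReal}

lemma legendre_eq (Φ : ℝ → ℝ≥0∞) (y : ℝ) : legendre Φ y = sSup (lset Φ y) := rfl

variable {Φ : ℝ → ℝ≥0∞}

lemma lset_nonempty (hΦ : PhiAssumptions Φ) (y : ℝ) : (lset Φ y).Nonempty :=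
  ⟨0 * y - (Φ 0).toReal, 0, le_refl 0, hΦ.finite_zero, rfl⟩

lemma lset_bddAbove (hΦ : PhiAssumptions Φ) (y : ℝ) : BddAbove (lset Φ y) := by
  have h := hΦ.superlinear.eventually (lt_mem_nhds (show ENNReal.ofReal (|y| + 1) < ⊤ from ENNReal.ofReal_lt_top))
  rw [eventually_atTop] at h
  obtain ⟨M₀, hM⟩ := h
  set M := max M₀ 1 with hMdef
  have hM1 : (1:ℝ) ≤ M := le_max_right _ _
  have hM0 : (0:ℝ) < M := lt_of_lt_of_le one_pos hM1
  refine ⟨M * (|y| + 1), ?_⟩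
  rintro s ⟨x, hx, hfin, rfl⟩
  by_cases hxM : x ≤ M
  · have : x * y ≤ M * (|y| + 1) := by
      calc x * y ≤ x * |y| := by
            exact mul_le_mul_of_nonneg_left (le_abs_self y) hx
        _ ≤ M * (|y| + 1) := by nlinarith [abs_nonneg y]
    have := ENNReal.toReal_nonneg (a := Φ x)
    linarith
  · push_neg at hxM
    have hxM₀ : M₀ ≤ x := le_trans (le_max_left _ _) hxM.le
    have hkey := hM x hxM₀
    have hxpos : (0:ℝ) < x := lt_trans hM0 hxM
    have hmul : ENNReal.ofReal (|y| + 1) * ENNReal.ofReal x ≤ Φ x := by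
      rw [← ENNReal.le_div_iff_mul_le (Or.inl (by simp [hxpos])) (Or.inl ENNReal.ofReal_ne_top)]
      exact hkey.le
    have h2 : (|y| + 1) * x ≤ (Φ x).toReal := by
      rw [← ENNReal.ofReal_mul (by positivity)] at hmul
      rw [← ENNReal.ofReal_le_iff_le_toReal hfin]
      exact hmul
    have : x * y ≤ x * |y| := mul_le_mul_of_nonneg_left (le_abs_self y) hx
    nlinarith [mul_pos hM0 (show (0:ℝ) < |y| + 1 by positivity)]

lemma fenchelYoung (hΦ : PhiAssumptions Φ) {z : ℝ} (hz : 0 ≤ z) (hfin : Φ z ≠ ⊤) (y : ℝ) :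
    z * y - (Φ z).toReal ≤ legendre Φ y :=
  le_csSup (lset_bddAbove hΦ y) ⟨z, hz, hfin, rfl⟩

lemma legendre_lb (hΦ : PhiAssumptions Φ) (y : ℝ) : -(Φ 0).toReal ≤ legendre Φ y := by
  simpa using fenchelYoung hΦ le_rfl hΦ.finite_zero y

lemma legendre_mono (hΦ : PhiAssumptions Φ) : Monotone (legendre Φ) := by
  intro y y' h
  rw [legendre_eq]
  refine csSup_le (lset_nonempty hΦ y) ?_
  rintro s ⟨x, hx, hfin, rfl⟩
  calc x * y - (Φ x).toReal ≤ x * y' - (Φ x).toReal := by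
        have := mul_le_mul_of_nonneg_left h hx; linarith
    _ ≤ legendre Φ y' := fenchelYoung hΦ hx hfin y'

lemma legendre_convex_ineq (hΦ : PhiAssumptions Φ) (y₁ y₂ u v : ℝ) (hu : 0 ≤ u) (hv : 0 ≤ v)
    (huv : u + v = 1) : legendre Φ (u * y₁ + v * y₂) ≤ u * legendre Φ y₁ + v * legendre Φ y₂ := by
  rw [legendre_eq]
  refine csSup_le (lset_nonempty hΦ _) ?_
  rintro s ⟨x, hx, hfin, rfl⟩
  have h1 := fenchelYoung hΦ hx hfin y₁
  have h2 := fenchelYoung hΦ hx hfin y₂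
  have e : x * (u * y₁ + v * y₂) - (Φ x).toReal
      = u * (x * y₁ - (Φ x).toReal) + v * (x * y₂ - (Φ x).toReal) := by linear_combination ((Φ x).toReal) * huv
  rw [e]
  have := mul_le_mul_of_nonneg_left h1 hu
  have := mul_le_mul_of_nonneg_left h2 hv
  linarith

lemma legendre_convexOn (hΦ : PhiAssumptions Φ) : ConvexOn ℝ univ (legendre Φ) := by
  refine ⟨convex_univ, fun x _ y _ u v hu hv huv => ?_⟩
  simpa [smul_eq_mul] using legendre_convex_ineq hΦ x y u v hu hv huv

end OCE

namespace OCE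
variable {Φ : ℝ → ℝ≥0∞}

lemma slope_le_slope (hΦ : PhiAssumptions Φ) {y x₁ x₂ : ℝ} (h : x₁ ≤ x₂) (h1 : x₁ ≠ y)
    (h2 : x₂ ≠ y) :
    (legendre Φ x₁ - legendre Φ y) / (x₁ - y) ≤ (legendre Φ x₂ - legendre Φ y) / (x₂ - y) :=
  (legendre_convexOn hΦ).secant_mono (mem_univ y) (mem_univ x₁) (mem_univ x₂) h1 h2 h

/-- set of right difference quotients -/
def Rq (Φ : ℝ → ℝ≥0∞) (y : ℝ) : Set ℝ :=
  {q : ℝ | ∃ t : ℝ, 0 < t ∧ q = (legendre Φ (y + t) - legendre Φ y) / t}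

/-- set of left difference quotients -/
def Lq (Φ : ℝ → ℝ≥0∞) (y : ℝ) : Set ℝ :=
  {q : ℝ | ∃ t : ℝ, 0 < t ∧ q = (legendre Φ y - legendre Φ (y - t)) / t}

def Dp (Φ : ℝ → ℝ≥0∞) (y : ℝ) : ℝ := sInf (Rq Φ y)

def Dm (Φ : ℝ → ℝ≥0∞) (y : ℝ) : ℝ := sSup (Lq Φ y)

lemma Rq_nonempty (Φ : ℝ → ℝ≥0∞) (y : ℝ) : (Rq Φ y).Nonempty :=
  ⟨_, 1, one_pos, rfl⟩

lemma Lq_nonempty (Φ : ℝ → ℝ≥0∞) (y : ℝ) : (Lq Φ y).Nonempty :=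
  ⟨_, 1, one_pos, rfl⟩

lemma Lq_le_Rq (hΦ : PhiAssumptions Φ) {y : ℝ} {a b : ℝ} (ha : a ∈ Lq Φ y) (hb : b ∈ Rq Φ y) :
    a ≤ b := by
  obtain ⟨t, ht, rfl⟩ := ha
  obtain ⟨t', ht', rfl⟩ := hb
  have key := slope_le_slope hΦ (y := y) (x₁ := y - t) (x₂ := y + t')
    (by linarith) (by linarith : y - t < y).ne (by linarith : y < y + t').ne'
  have e1 : (legendre Φ (y - t) - legendre Φ y) / (y - t - y)
      = (legendre Φ y - legendre Φ (y - t)) / t := by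
    rw [show y - t - y = -t by ring, div_neg, ← neg_div, neg_sub]
  have e2 : (legendre Φ (y + t') - legendre Φ y) / (y + t' - y)
      = (legendre Φ (y + t') - legendre Φ y) / t' := by rw [show y + t' - y = t' by ring]
  rw [e1, e2] at key
  exact key

lemma Rq_bddBelow (hΦ : PhiAssumptions Φ) (y : ℝ) : BddBelow (Rq Φ y) :=
  ⟨(legendre Φ y - legendre Φ (y - 1)) / 1, fun b hb => Lq_le_Rq hΦ ⟨1, one_pos, rfl⟩ hb⟩

lemma Lq_bddAbove (hΦ : PhiAssumptions Φ) (y : ℝ) : BddAbove (Lq Φ y) :=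
  ⟨(legendre Φ (y + 1) - legendre Φ y) / 1, fun a ha => Lq_le_Rq hΦ ha ⟨1, one_pos, rfl⟩⟩

lemma Dm_le_Dp (hΦ : PhiAssumptions Φ) (y : ℝ) : Dm Φ y ≤ Dp Φ y :=
  csSup_le (Lq_nonempty Φ y) fun a ha =>
    le_csInf (Rq_nonempty Φ y) fun b hb => Lq_le_Rq hΦ ha hb

lemma Dm_nonneg (hΦ : PhiAssumptions Φ) (y : ℝ) : 0 ≤ Dm Φ y := by
  refine le_csSup_of_le (Lq_bddAbove hΦ y) ⟨1, one_pos, rfl⟩ ?_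
  have := legendre_mono hΦ (show y - 1 ≤ y by linarith)
  simp only [div_one]
  linarith

lemma Dp_nonneg (hΦ : PhiAssumptions Φ) (y : ℝ) : 0 ≤ Dp Φ y :=
  le_trans (Dm_nonneg hΦ y) (Dm_le_Dp hΦ y)

lemma Dm_ge (hΦ : PhiAssumptions Φ) (y : ℝ) : legendre Φ y - legendre Φ (y - 1) ≤ Dm Φ y :=
  le_csSup_of_le (Lq_bddAbove hΦ y) ⟨1, one_pos, rfl⟩ (by simp)

lemma Dp_le (hΦ : PhiAssumptions Φ) (y : ℝ) : Dp Φ y ≤ legendre Φ (y + 1) - legendre Φ y :=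
  csInf_le_of_le (Rq_bddBelow hΦ y) ⟨1, one_pos, rfl⟩ (by simp)

lemma subgrad (hΦ : PhiAssumptions Φ) {y z : ℝ} (h1 : Dm Φ y ≤ z) (h2 : z ≤ Dp Φ y) (w : ℝ) :
    legendre Φ y + z * (w - y) ≤ legendre Φ w := by
  rcases lt_trichotomy w y with hw | hw | hw
  · have hmem : (legendre Φ y - legendre Φ (y - (y - w))) / (y - w) ∈ Lq Φ y :=
      ⟨y - w, by linarith, rfl⟩
    have hle : (legendre Φ y - legendre Φ w) / (y - w) ≤ z := by
      have h' : (legendre Φ y - legendre Φ (y - (y - w))) / (y - w) ≤ Dm Φ y :=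
        le_csSup (Lq_bddAbove hΦ y) hmem
      simp only [sub_sub_cancel] at h'
      linarith
    rw [div_le_iff₀ (by linarith : (0:ℝ) < y - w)] at hle
    nlinarith
  · subst hw; simp
  · have hmem : (legendre Φ (y + (w - y)) - legendre Φ y) / (w - y) ∈ Rq Φ y :=
      ⟨w - y, by linarith, rfl⟩
    have hle : z ≤ (legendre Φ w - legendre Φ y) / (w - y) := by
      have h' : Dp Φ y ≤ (legendre Φ (y + (w - y)) - legendre Φ y) / (w - y) :=
        csInf_le (Rq_bddBelow hΦ y) hmem
      simp only [add_sub_cancel] at h'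
      linarith
    rw [le_div_iff₀ (by linarith : (0:ℝ) < w - y)] at hle
    nlinarith

lemma Dp_le_Dm_of_lt (hΦ : PhiAssumptions Φ) {y y' : ℝ} (h : y < y') : Dp Φ y ≤ Dm Φ y' := by
  have h1 : Dp Φ y ≤ (legendre Φ (y + (y' - y)) - legendre Φ y) / (y' - y) :=
    csInf_le (Rq_bddBelow hΦ y) ⟨y' - y, by linarith, rfl⟩
  have h2 : (legendre Φ y' - legendre Φ (y' - (y' - y))) / (y' - y) ≤ Dm Φ y' :=
    le_csSup (Lq_bddAbove hΦ y') ⟨y' - y, by linarith, rfl⟩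
  simp only [add_sub_cancel, sub_sub_cancel] at h1 h2
  linarith

lemma Dp_mono (hΦ : PhiAssumptions Φ) : Monotone (Dp Φ) := by
  intro y y' h
  rcases eq_or_lt_of_le h with rfl | h
  · exact le_rfl
  · exact le_trans (Dp_le_Dm_of_lt hΦ h) (Dm_le_Dp hΦ y')

lemma Dm_mono (hΦ : PhiAssumptions Φ) : Monotone (Dm Φ) := by
  intro y y' h
  rcases eq_or_lt_of_le h with rfl | h
  · exact le_rfl
  · exact le_trans (Dm_le_Dp hΦ y) (Dp_le_Dm_of_lt hΦ h)

end OCE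

namespace OCE
variable {Φ : ℝ → ℝ≥0∞}

/-- Local lower bound from lower semicontinuity: near `z`, `Φ` stays (weakly) above `r`. -/
lemma lsc_local_bound (hΦ : PhiAssumptions Φ) {z : ℝ} (hz : 0 ≤ z) {r : ℝ}
    (hr : Φ z = ⊤ ∨ r < (Φ z).toReal) :
    ∃ δ : ℝ, 0 < δ ∧ ∀ x : ℝ, 0 ≤ x → |x - z| < δ → Φ x ≠ ⊤ → r ≤ (Φ x).toReal := by
  rcases le_or_gt r 0 with hr0 | hr0
  · exact ⟨1, one_pos, fun x _ _ _ => le_trans hr0 ENNReal.toReal_nonneg⟩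
  · have hc : ENNReal.ofReal r < Φ z := by
      rcases eq_or_ne (Φ z) ⊤ with h' | h'
      · simp [h']
      · exact (ENNReal.ofReal_lt_iff_lt_toReal hr0.le h').mpr (hr.resolve_left h')
    have hev : ∀ᶠ x in 𝓝[Set.Ici 0] z, ENNReal.ofReal r < Φ x :=
      hΦ.lsc z (mem_Ici.mpr hz) (ENNReal.ofReal r) hc
    rw [eventually_iff, Metric.mem_nhdsWithin_iff] at hev
    obtain ⟨δ, hδ, hsub⟩ := hev
    refine ⟨δ, hδ, fun x hx hxz hfin => ?_⟩
    have hmem : x ∈ Metric.ball z δ ∩ Set.Ici 0 := by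
      constructor
      · rw [Metric.mem_ball, Real.dist_eq]; exact hxz
      · exact hx
    exact ((ENNReal.ofReal_lt_iff_lt_toReal hr0.le hfin).mp (hsub hmem)).le

/-- Existence of an affine minorant of `Φ` through a point strictly below the graph. -/
lemma exists_affine_minorant (hΦ : PhiAssumptions Φ) {z : ℝ} (hz : 0 ≤ z) {r : ℝ}
    (hr : Φ z = ⊤ ∨ r < (Φ z).toReal) :
    ∃ w : ℝ, ∀ x : ℝ, 0 ≤ x → Φ x ≠ ⊤ → r + w * (x - z) ≤ (Φ x).toReal := by
  obtain ⟨δ, hδ, hloc⟩ := lsc_local_bound hΦ hz hr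
  set A : Set ℝ := {x | 0 ≤ x ∧ x < z ∧ Φ x ≠ ⊤} with hA
  set B : Set ℝ := {x | z < x ∧ Φ x ≠ ⊤} with hB
  set sA : Set ℝ := (fun x => (r - (Φ x).toReal) / (z - x)) '' A with hsA
  set sB : Set ℝ := (fun x => ((Φ x).toReal - r) / (x - z)) '' B with hsB
  -- the cross inequality from convexity of Φ
  have cross : ∀ a ∈ sA, ∀ b ∈ sB, a ≤ b := by
    rintro _ ⟨x, ⟨hx0, hxz, hxfin⟩, rfl⟩ _ ⟨x', ⟨hx'z, hx'fin⟩, rfl⟩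
    have hxx' : x < x' := lt_trans hxz hx'z
    set u : ℝ := (x' - z) / (x' - x) with hu
    set v : ℝ := (z - x) / (x' - x) with hv
    have hden : (0:ℝ) < x' - x := by linarith
    have hu0 : 0 ≤ u := div_nonneg (by linarith) (by linarith)
    have hv0 : 0 ≤ v := div_nonneg (by linarith) (by linarith)
    have huv : u + v = 1 := by rw [hu, hv]; field_simp; ring
    have hzval : u * x + v * x' = z := by rw [hu, hv]; field_simp; ring
    have hconv := hΦ.convex x (mem_Ici.mpr hx0) x' (mem_Ici.mpr (by linarith)) u v hu0 hv0 huv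
    rw [hzval] at hconv
    -- Φ z is finite and z-value below combination
    have hfinz : Φ z ≠ ⊤ := by
      intro htop
      rw [htop] at hconv
      exact (lt_of_le_of_lt hconv (by
        refine ENNReal.add_lt_top.mpr ⟨?_, ?_⟩ <;>
          exact ENNReal.mul_lt_top ENNReal.ofReal_lt_top
            (lt_top_iff_ne_top.mpr (by assumption)))).ne rfl
    have hrz : r < (Φ z).toReal := hr.resolve_left hfinz
    have htr : (Φ z).toReal ≤ u * (Φ x).toReal + v * (Φ x').toReal := by
      have := ENNReal.toReal_mono (by
        refine ENNReal.add_ne_top.mpr ⟨?_, ?_⟩ <;>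
          exact ENNReal.mul_ne_top ENNReal.ofReal_ne_top (by assumption)) hconv
      rwa [ENNReal.toReal_add (ENNReal.mul_ne_top ENNReal.ofReal_ne_top hxfin)
        (ENNReal.mul_ne_top ENNReal.ofReal_ne_top hx'fin),
        ENNReal.toReal_mul, ENNReal.toReal_mul,
        ENNReal.toReal_ofReal hu0, ENNReal.toReal_ofReal hv0] at this
    have hkey : r * (x' - x) < (Φ x).toReal * (x' - z) + (Φ x').toReal * (z - x) := by
      have h1 : r * (x' - x) < (Φ z).toReal * (x' - x) := by nlinarith
      have h2 : (Φ z).toReal * (x' - x) ≤ (u * (Φ x).toReal + v * (Φ x').toReal) * (x' - x) :=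
        mul_le_mul_of_nonneg_right htr hden.le
      have h3 : (u * (Φ x).toReal + v * (Φ x').toReal) * (x' - x)
          = (Φ x).toReal * (x' - z) + (Φ x').toReal * (z - x) := by
        rw [hu, hv]; field_simp
      linarith
    rw [div_le_div_iff₀ (by linarith : (0:ℝ) < z - x) (by linarith : (0:ℝ) < x' - z)]
    nlinarith
  -- bounds
  have bddB : ∀ b ∈ sB, -(|r| / δ) ≤ b := by
    rintro _ ⟨x, ⟨hxz, hxfin⟩, rfl⟩
    have hden : (0:ℝ) < x - z := by linarith
    rcases lt_or_ge (x - z) δ with hlt | hge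
    · have := hloc x (by linarith) (by rw [abs_of_pos hden]; exact hlt) hxfin
      have h0 : 0 ≤ ((Φ x).toReal - r) / (x - z) := div_nonneg (by linarith) hden.le
      have hge0 : -(|r| / δ) ≤ 0 := neg_nonpos.mpr (by positivity)
      linarith
    · have h1 : -(|r|) ≤ (Φ x).toReal - r := by
        have := ENNReal.toReal_nonneg (a := Φ x)
        have := le_abs_self r
        linarith
      have h2 : -(|r|) / (x - z) ≤ ((Φ x).toReal - r) / (x - z) := by gcongr
      have h3 : -(|r| / δ) ≤ -(|r|) / (x - z) := by
        rw [neg_div, neg_le_neg_iff]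
        exact div_le_div_of_nonneg_left (abs_nonneg r) hδ hge
      linarith
  have bddA : ∀ a ∈ sA, a ≤ |r| / δ := by
    rintro _ ⟨x, ⟨hx0, hxz, hxfin⟩, rfl⟩
    have hden : (0:ℝ) < z - x := by linarith
    rcases lt_or_ge (z - x) δ with hlt | hge
    · have := hloc x hx0 (by rw [abs_sub_comm, abs_of_pos hden]; exact hlt) hxfin
      have hle0 : (r - (Φ x).toReal) / (z - x) ≤ 0 := by
        apply div_nonpos_of_nonpos_of_nonneg <;> linarith
      have : (0:ℝ) ≤ |r| / δ := by positivity
      linarith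
    · have h1 : r - (Φ x).toReal ≤ |r| := by
        have := ENNReal.toReal_nonneg (a := Φ x)
        have := le_abs_self r
        linarith
      have h2 : (r - (Φ x).toReal) / (z - x) ≤ |r| / (z - x) := by gcongr
      have h3 : |r| / (z - x) ≤ |r| / δ := div_le_div_of_nonneg_left (abs_nonneg r) hδ hge
      linarith
  -- trichotomy verification helper
  have verify : ∀ w : ℝ, (∀ a ∈ sA, a ≤ w) → (∀ b ∈ sB, w ≤ b) →
      ∀ x : ℝ, 0 ≤ x → Φ x ≠ ⊤ → r + w * (x - z) ≤ (Φ x).toReal := by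
    intro w hwA hwB x hx0 hxfin
    rcases lt_trichotomy x z with hlt | rfl | hgt
    · have hmem : (r - (Φ x).toReal) / (z - x) ∈ sA := ⟨x, ⟨hx0, hlt, hxfin⟩, rfl⟩
      have := hwA _ hmem
      rw [div_le_iff₀ (by linarith : (0:ℝ) < z - x)] at this
      nlinarith
    · have : r ≤ (Φ x).toReal := by
        rcases hr with h | h
        · exact absurd h hxfin
        · exact h.le
      simpa using this
    · have hmem : ((Φ x).toReal - r) / (x - z) ∈ sB := ⟨x, ⟨hgt, hxfin⟩, rfl⟩
      have := hwB _ hmem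
      rw [le_div_iff₀ (by linarith : (0:ℝ) < x - z)] at this
      nlinarith
  by_cases hBne : sB.Nonempty
  · refine ⟨sInf sB, verify _ ?_ ?_⟩
    · intro a ha
      exact le_csInf hBne (fun b hb => cross a ha b hb)
    · intro b hb
      exact csInf_le ⟨-(|r| / δ), fun b' hb' => bddB b' hb'⟩ hb
  · by_cases hAne : sA.Nonempty
    · refine ⟨sSup sA, verify _ ?_ ?_⟩
      · intro a ha
        exact le_csSup ⟨|r| / δ, fun a' ha' => bddA a' ha'⟩ ha
      · intro b hb
        exact absurd ⟨b, hb⟩ hBne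
    · refine ⟨0, verify 0 ?_ ?_⟩
      · intro a ha; exact absurd ⟨a, ha⟩ hAne
      · intro b hb; exact absurd ⟨b, hb⟩ hBne

/-- Fenchel–Moreau equality at subgradient points of the conjugate. -/
lemma fenchelMoreau (hΦ : PhiAssumptions Φ) {z y : ℝ} (hz : 0 ≤ z)
    (hsub : ∀ w : ℝ, legendre Φ y + z * (w - y) ≤ legendre Φ w) :
    Φ z ≠ ⊤ ∧ (Φ z).toReal = z * y - legendre Φ y := by
  have key : ∀ r : ℝ, (Φ z = ⊤ ∨ r < (Φ z).toReal) → r ≤ z * y - legendre Φ y := by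
    intro r hr
    obtain ⟨w, hw⟩ := exists_affine_minorant hΦ hz hr
    have hψw : legendre Φ w ≤ z * w - r := by
      rw [legendre_eq]
      refine csSup_le (lset_nonempty hΦ w) ?_
      rintro s ⟨x, hx0, hxfin, rfl⟩
      have := hw x hx0 hxfin
      nlinarith
    have := hsub w
    nlinarith
  have hfin : Φ z ≠ ⊤ := by
    intro htop
    have := key (z * y - legendre Φ y + 1) (Or.inl htop)
    linarith
  refine ⟨hfin, le_antisymm ?_ ?_⟩
  · by_contra hcon
    push_neg at hcon
    have hmid := key ((z * y - legendre Φ y + (Φ z).toReal) / 2) (Or.inr (by linarith))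
    linarith
  · have := fenchelYoung hΦ hz hfin y
    linarith

end OCE

namespace OCE
variable {Φ : ℝ → ℝ≥0∞}

lemma measurable_phi_max (hΦ : PhiAssumptions Φ) : Measurable (fun x : ℝ => Φ (max x 0)) := by
  refine LowerSemicontinuous.measurable ?_
  intro x c hc
  have hmem : max x 0 ∈ Set.Ici (0:ℝ) := Set.mem_Ici.mpr (le_max_right _ _)
  have hev := hΦ.lsc (max x 0) hmem c hc
  have htend : Tendsto (fun x' : ℝ => max x' 0) (𝓝 x) (𝓝[Set.Ici 0] (max x 0)) := by
    rw [tendsto_nhdsWithin_iff]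
    exact ⟨(continuous_id.max continuous_const).tendsto x,
      Eventually.of_forall fun x' => Set.mem_Ici.mpr (le_max_right _ _)⟩
  exact htend.eventually hev

lemma right_slope_le (hΦ : PhiAssumptions Φ) {y t t' : ℝ} (h0 : 0 < t) (h : t ≤ t') :
    (legendre Φ (y + t) - legendre Φ y) / t ≤ (legendre Φ (y + t') - legendre Φ y) / t' := by
  have key := slope_le_slope hΦ (y := y) (x₁ := y + t) (x₂ := y + t')
    (by linarith) (by linarith : y < y + t).ne' (by linarith : y < y + t').ne'
  simpa [add_sub_cancel_left] using key

lemma left_slope_le (hΦ : PhiAssumptions Φ) {y t t' : ℝ} (h0 : 0 < t) (h : t ≤ t') :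
    (legendre Φ y - legendre Φ (y - t')) / t' ≤ (legendre Φ y - legendre Φ (y - t)) / t := by
  have key := slope_le_slope hΦ (y := y) (x₁ := y - t') (x₂ := y - t)
    (by linarith) (by linarith : y - t' < y).ne (by linarith : y - t < y).ne
  have e : ∀ s : ℝ, (legendre Φ (y - s) - legendre Φ y) / (y - s - y)
      = (legendre Φ y - legendre Φ (y - s)) / s := by
    intro s
    rw [show y - s - y = -s by ring, div_neg, ← neg_div, neg_sub]
  rw [e t, e t'] at key
  exact key

lemma usq_pos (n : ℕ) : (0:ℝ) < 1 / (n + 1) := by positivity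

lemma usq_anti : ∀ {n m : ℕ}, n ≤ m → (1:ℝ) / (m + 1) ≤ 1 / (n + 1) := by
  intro n m h
  apply div_le_div_of_nonneg_left one_pos.le (by positivity)
  exact_mod_cast by omega

lemma tendsto_right_slope (hΦ : PhiAssumptions Φ) (y : ℝ) :
    Tendsto (fun n : ℕ => (legendre Φ (y + 1 / (n + 1)) - legendre Φ y) / (1 / (n + 1)))
      atTop (𝓝 (Dp Φ y)) := by
  set q : ℕ → ℝ := fun n => (legendre Φ (y + 1 / (n + 1)) - legendre Φ y) / (1 / (n + 1)) with hq
  have hanti : Antitone q := fun n m hnm => right_slope_le hΦ (usq_pos m) (usq_anti hnm)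
  have hbdd : BddBelow (Set.range q) := by
    obtain ⟨L, hL⟩ := Rq_bddBelow hΦ y
    exact ⟨L, by rintro _ ⟨n, rfl⟩; exact hL ⟨1 / (n + 1), usq_pos n, rfl⟩⟩
  have htend := tendsto_atTop_ciInf hanti hbdd
  have heq : ⨅ n, q n = Dp Φ y := by
    refine le_antisymm ?_ ?_
    · refine le_csInf (Rq_nonempty Φ y) ?_
      rintro b ⟨t, ht, rfl⟩
      obtain ⟨n, hn⟩ := exists_nat_one_div_lt ht
      exact ciInf_le_of_le hbdd n (right_slope_le hΦ (usq_pos n) hn.le)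
    · exact le_ciInf fun n => csInf_le (Rq_bddBelow hΦ y) ⟨1 / (n + 1), usq_pos n, rfl⟩
  rwa [heq] at htend

lemma tendsto_left_slope (hΦ : PhiAssumptions Φ) (y : ℝ) :
    Tendsto (fun n : ℕ => (legendre Φ y - legendre Φ (y - 1 / (n + 1))) / (1 / (n + 1)))
      atTop (𝓝 (Dm Φ y)) := by
  set q : ℕ → ℝ := fun n => (legendre Φ y - legendre Φ (y - 1 / (n + 1))) / (1 / (n + 1)) with hq
  have hmono : Monotone q := fun n m hnm => left_slope_le hΦ (usq_pos m) (usq_anti hnm)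
  have hbdd : BddAbove (Set.range q) := by
    obtain ⟨L, hL⟩ := Lq_bddAbove hΦ y
    exact ⟨L, by rintro _ ⟨n, rfl⟩; exact hL ⟨1 / (n + 1), usq_pos n, rfl⟩⟩
  have htend := tendsto_atTop_ciSup hmono hbdd
  have heq : ⨆ n, q n = Dm Φ y := by
    refine le_antisymm ?_ ?_
    · exact ciSup_le fun n => le_csSup (Lq_bddAbove hΦ y) ⟨1 / (n + 1), usq_pos n, rfl⟩
    · refine csSup_le (Lq_nonempty Φ y) ?_
      rintro b ⟨t, ht, rfl⟩
      obtain ⟨n, hn⟩ := exists_nat_one_div_lt ht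
      exact le_ciSup_of_le hbdd n (left_slope_le hΦ (usq_pos n) hn.le)
  rwa [heq] at htend

variable {Ω : Type*} [MeasurableSpace Ω] {P : Measure Ω} [IsProbabilityMeasure P]
variable {X : Ω → ℝ}

lemma integrable_psi_comp (hΦ : PhiAssumptions Φ) (hXmeas : Measurable X)
    (hXOrlicz : ∀ c : ℝ, 0 < c → Integrable (fun ω => legendre Φ (c * |X ω|)) P)
    {a : ℝ} (c : ℝ) (ha : 0 < a) :
    Integrable (fun ω => legendre Φ (a * X ω + c)) P := by
  have hmeas : Measurable fun ω => legendre Φ (a * X ω + c) :=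
    (legendre_mono hΦ).measurable.comp ((hXmeas.const_mul a).add_const c)
  refine Integrable.mono'
    (g := fun ω => |legendre Φ (2 * a * |X ω|)| / 2 + (|legendre Φ (2 * |c|)| / 2 + (Φ 0).toReal))
    (((hXOrlicz (2 * a) (by positivity)).abs.div_const 2).add (integrable_const _))
    hmeas.aestronglyMeasurable (ae_of_all _ fun ω => ?_)
  show |legendre Φ (a * X ω + c)|
      ≤ |legendre Φ (2 * a * |X ω|)| / 2 + (|legendre Φ (2 * |c|)| / 2 + (Φ 0).toReal)
  rw [abs_le]
  have habs : legendre Φ (2 * a * |X ω|) ≤ |legendre Φ (2 * a * |X ω|)| := le_abs_self _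
  have habs2 : legendre Φ (2 * |c|) ≤ |legendre Φ (2 * |c|)| := le_abs_self _
  have h2 : (0:ℝ) ≤ |legendre Φ (2 * a * |X ω|)| / 2 := by positivity
  have h3 : (0:ℝ) ≤ |legendre Φ (2 * |c|)| / 2 := by positivity
  have h0 : (0:ℝ) ≤ (Φ 0).toReal := ENNReal.toReal_nonneg
  constructor
  · have h1 := legendre_lb hΦ (a * X ω + c)
    linarith
  · have hmono : legendre Φ (a * X ω + c)
        ≤ legendre Φ ((1/2) * (2 * a * |X ω|) + (1/2) * (2 * |c|)) := by
      apply legendre_mono hΦ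
      have h1 : a * X ω ≤ a * |X ω| := mul_le_mul_of_nonneg_left (le_abs_self _) ha.le
      have h2 : c ≤ |c| := le_abs_self c
      nlinarith
    have hconv := legendre_convex_ineq hΦ (2 * a * |X ω|) (2 * |c|) (1/2) (1/2)
      (by norm_num) (by norm_num) (by norm_num)
    linarith

lemma integrable_psi_X_add (hΦ : PhiAssumptions Φ) (hXmeas : Measurable X)
    (hXOrlicz : ∀ c : ℝ, 0 < c → Integrable (fun ω => legendre Φ (c * |X ω|)) P)
    (c : ℝ) : Integrable (fun ω => legendre Φ (X ω + c)) P := by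
  simpa using integrable_psi_comp hΦ hXmeas hXOrlicz c one_pos

lemma integrable_X (hΦ : PhiAssumptions Φ) (hXmeas : Measurable X)
    (hXOrlicz : ∀ c : ℝ, 0 < c → Integrable (fun ω => legendre Φ (c * |X ω|)) P) :
    Integrable X P := by
  obtain ⟨x₀, hx₀1, hx₀fin⟩ := hΦ.finite_gt_one
  have hx₀ : (0:ℝ) < x₀ := by linarith
  refine Integrable.mono' (g := fun ω => (legendre Φ (1 * |X ω|) + (Φ x₀).toReal) / x₀)
    (((hXOrlicz 1 one_pos).add (integrable_const _)).div_const x₀)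
    hXmeas.aestronglyMeasurable (ae_of_all _ fun ω => ?_)
  have hFY := fenchelYoung hΦ hx₀.le hx₀fin (1 * |X ω|)
  rw [Real.norm_eq_abs, le_div_iff₀ hx₀]
  nlinarith [abs_nonneg (X ω)]

end OCE

namespace OCE
variable {Φ : ℝ → ℝ≥0∞}
variable {Ω : Type*} [MeasurableSpace Ω] {P : Measure Ω} [IsProbabilityMeasure P]
variable {X : Ω → ℝ}

/-- Weak duality: every candidate value in the divergence-risk supremum is dominated by every
value of the OCE objective. -/
lemma weak_duality (hΦ : PhiAssumptions Φ) (hXmeas : Measurable X)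
    (hXOrlicz : ∀ c : ℝ, 0 < c → Integrable (fun ω => legendre Φ (c * |X ω|)) P)
    (x : ℝ) {Q : Measure Ω} (hQ : IsProbabilityMeasure Q) (hQP : Q ≪ P)
    (hfin : (∫⁻ ω, Φ ((Q.rnDeriv P ω).toReal) ∂P) ≠ ⊤) :
    (∫ ω, X ω ∂Q) - (∫⁻ ω, Φ ((Q.rnDeriv P ω).toReal) ∂P).toReal
      ≤ (∫ ω, legendre Φ (X ω + x) ∂P) - x := by
  set W : Ω → ℝ := fun ω => (Q.rnDeriv P ω).toReal with hW
  have Wmeas : Measurable W := (Measure.measurable_rnDeriv Q P).ennreal_toReal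
  have Wnn : ∀ ω, 0 ≤ W ω := fun _ => ENNReal.toReal_nonneg
  have hΦW_meas : Measurable fun ω => Φ (W ω) := by
    have he : (fun ω => Φ (W ω)) = (fun t => Φ (max t 0)) ∘ W := by
      funext ω; simp [Function.comp, max_eq_left (Wnn ω)]
    rw [he]; exact (measurable_phi_max hΦ).comp Wmeas
  have hae : ∀ᵐ ω ∂P, Φ (W ω) ≠ ⊤ := by
    filter_upwards [ae_lt_top hΦW_meas hfin] with ω h using h.ne
  have hΦWint : Integrable (fun ω => (Φ (W ω)).toReal) P :=
    integrable_toReal_of_lintegral_ne_top hΦW_meas.aemeasurable hfin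
  have htoReal : ∫ ω, (Φ (W ω)).toReal ∂P = (∫⁻ ω, Φ (W ω) ∂P).toReal :=
    integral_toReal hΦW_meas.aemeasurable (ae_lt_top hΦW_meas hfin)
  have hWX_int : Integrable (fun ω => W ω * X ω) P := by
    refine Integrable.mono' (g := fun ω => (Φ (W ω)).toReal + legendre Φ (1 * |X ω|))
      (hΦWint.add (hXOrlicz 1 one_pos)) (Wmeas.mul hXmeas).aestronglyMeasurable ?_
    filter_upwards [hae] with ω hω
    have hFY := fenchelYoung hΦ (Wnn ω) hω (1 * |X ω|)
    have he : ‖W ω * X ω‖ = W ω * |X ω| := by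
      rw [Real.norm_eq_abs, abs_mul, abs_of_nonneg (Wnn ω)]
    rw [he]
    nlinarith [ENNReal.toReal_nonneg (a := Φ (W ω))]
  have hIQ : ∫ ω, X ω ∂Q = ∫ ω, W ω * X ω ∂P := by
    rw [← MeasureTheory.integral_rnDeriv_smul hQP]
    simp only [smul_eq_mul, hW]
  have hWint : Integrable W P := Measure.integrable_toReal_rnDeriv
  have hIW : ∫ ω, W ω ∂P = 1 := by
    rw [hW, Measure.integral_toReal_rnDeriv hQP, probReal_univ]
  have hψint := integrable_psi_X_add hΦ hXmeas hXOrlicz x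
  have hmono : ∫ ω, (W ω * X ω - (Φ (W ω)).toReal) ∂P
      ≤ ∫ ω, (legendre Φ (X ω + x) - x * W ω) ∂P := by
    refine integral_mono_ae (hWX_int.sub hΦWint) (hψint.sub (hWint.const_mul x)) ?_
    filter_upwards [hae] with ω hω
    have hFY := fenchelYoung hΦ (Wnn ω) hω (X ω + x)
    have hexp : W ω * (X ω + x) = W ω * X ω + x * W ω := by ring
    show W ω * X ω - (Φ (W ω)).toReal ≤ legendre Φ (X ω + x) - x * W ω
    linarith [hexp ▸ hFY]
  rw [integral_sub hWX_int hΦWint, integral_sub hψint (hWint.const_mul x),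
    MeasureTheory.integral_const_mul, hIW] at hmono
  rw [hIQ, ← htoReal]
  linarith

end OCE

/-- For every `X` in the Orlicz heart `H^{Φ*}`, the divergence risk measure
satisfies the optimized-certainty-equivalent representation
`ρ^Φ(X) = inf_{x ∈ ℝ} E[Φ*(X + x) - x]`. -/
theorem divergenceRisk_eq_optimizedCertaintyEquivalent
    {Ω : Type*} [MeasurableSpace Ω] (P : Measure Ω) [IsProbabilityMeasure P]
    (hAtomless : ∀ A : Set Ω, MeasurableSet A → P A ≠ 0 →
      ∃ B : Set Ω, B ⊆ A ∧ MeasurableSet B ∧ P B ≠ 0 ∧ P B ≠ P A)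
    (Φ : ℝ → ℝ≥0∞) (hΦ : PhiAssumptions Φ)
    (X : Ω → ℝ) (hXmeas : Measurable X)
    (hXOrlicz : ∀ c : ℝ, 0 < c → Integrable (fun ω => legendre Φ (c * |X ω|)) P) :
    divergenceRisk P Φ X = ⨅ x : ℝ, ((∫ ω, legendre Φ (X ω + x) ∂P) - x) := by
  classical
  obtain ⟨x₀, hx₀1, hx₀fin⟩ := hΦ.finite_gt_one
  have hx₀pos : (0:ℝ) < x₀ := by linarith
  have hIX : Integrable X P := OCE.integrable_X hΦ hXmeas hXOrlicz
  have ipxa : ∀ c : ℝ, Integrable (fun ω => legendre Φ (X ω + c)) P :=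
    OCE.integrable_psi_X_add hΦ hXmeas hXOrlicz
  set g : ℝ → ℝ := fun x => (∫ ω, legendre Φ (X ω + x) ∂P) - x with hg
  -- convexity of g
  have hgconv : ConvexOn ℝ univ g := by
    refine ⟨convex_univ, fun x1 _ x2 _ u v hu hv huv => ?_⟩
    simp only [smul_eq_mul, hg]
    have hpt : ∀ ω, legendre Φ (X ω + (u * x1 + v * x2))
        ≤ u * legendre Φ (X ω + x1) + v * legendre Φ (X ω + x2) := by
      intro ω
      have he : X ω + (u * x1 + v * x2) = u * (X ω + x1) + v * (X ω + x2) := by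
        linear_combination (-(X ω)) * huv
      rw [he]
      exact OCE.legendre_convex_ineq hΦ _ _ u v hu hv huv
    have hintle : ∫ ω, legendre Φ (X ω + (u * x1 + v * x2)) ∂P
        ≤ ∫ ω, (u * legendre Φ (X ω + x1) + v * legendre Φ (X ω + x2)) ∂P :=
      integral_mono (ipxa _) (((ipxa x1).const_mul u).add ((ipxa x2).const_mul v)) hpt
    rw [integral_add ((ipxa x1).const_mul u) ((ipxa x2).const_mul v),
      integral_const_mul, integral_const_mul] at hintle
    linarith
  have hgcont : Continuous g := by
    exact continuousOn_univ.mp (hgconv.continuousOn isOpen_univ)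
  -- coercivity lower bounds
  have lb1 : ∀ x : ℝ, x₀ * (∫ ω, X ω ∂P) + x₀ * x - (Φ x₀).toReal - x ≤ g x := by
    intro x
    have hpt : ∀ ω, x₀ * (X ω + x) - (Φ x₀).toReal ≤ legendre Φ (X ω + x) := fun ω =>
      OCE.fenchelYoung hΦ hx₀pos.le hx₀fin (X ω + x)
    have hIax : Integrable (fun ω => X ω + x) P := by
      exact hIX.add (integrable_const x)
    have hImul : Integrable (fun ω => x₀ * (X ω + x)) P := hIax.const_mul x₀
    have hIlhs : Integrable (fun ω => x₀ * (X ω + x) - (Φ x₀).toReal) P :=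
      hImul.sub (integrable_const _)
    have := integral_mono hIlhs (ipxa x) hpt
    rw [integral_sub hImul (integrable_const _), integral_const_mul,
      integral_add hIX (integrable_const x)] at this
    simp only [integral_const, probReal_univ, one_smul, smul_eq_mul,
      one_mul] at this
    simp only [hg]
    linarith
  have lb2 : ∀ x : ℝ, -(Φ 0).toReal - x ≤ g x := by
    intro x
    have hpt : ∀ ω, -(Φ 0).toReal ≤ legendre Φ (X ω + x) := fun ω => OCE.legendre_lb hΦ _
    have := integral_mono (integrable_const _) (ipxa x) hpt
    rw [integral_const, probReal_univ, one_smul] at this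
    simp only [hg]
    linarith
  -- a minimizer of g
  set IX : ℝ := ∫ ω, X ω ∂P with hIXdef
  set R : ℝ := max (|x₀ * IX - (Φ x₀).toReal - g 0| / (x₀ - 1)) (|g 0| + (Φ 0).toReal) + 1
    with hR
  have hR1 : (1:ℝ) ≤ R := by
    have h1 : (0:ℝ) ≤ |g 0| + (Φ 0).toReal :=
      add_nonneg (abs_nonneg _) ENNReal.toReal_nonneg
    have := le_max_right (|x₀ * IX - (Φ x₀).toReal - g 0| / (x₀ - 1)) (|g 0| + (Φ 0).toReal)
    simp only [hR]
    linarith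
  have hcoer : ∀ x : ℝ, R ≤ |x| → g 0 ≤ g x := by
    intro x hx
    rcases le_or_gt 0 x with hx0 | hx0
    · rw [abs_of_nonneg hx0] at hx
      have hxR : |x₀ * IX - (Φ x₀).toReal - g 0| / (x₀ - 1) ≤ x := by
        have := le_max_left (|x₀ * IX - (Φ x₀).toReal - g 0| / (x₀ - 1)) (|g 0| + (Φ 0).toReal)
        simp only [hR] at hx
        linarith
      have hmul : |x₀ * IX - (Φ x₀).toReal - g 0| ≤ (x₀ - 1) * x := by
        rw [div_le_iff₀ (by linarith : (0:ℝ) < x₀ - 1)] at hxR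
        linarith [hxR]
      have habs := neg_abs_le (x₀ * IX - (Φ x₀).toReal - g 0)
      have := lb1 x
      linarith
    · rw [abs_of_neg hx0] at hx
      have hxR : |g 0| + (Φ 0).toReal ≤ -x := by
        have := le_max_right (|x₀ * IX - (Φ x₀).toReal - g 0| / (x₀ - 1)) (|g 0| + (Φ 0).toReal)
        simp only [hR] at hx
        linarith
      have := lb2 x
      have := le_abs_self (g 0)
      linarith
  obtain ⟨xs, hxs_mem, hxs_min⟩ := isCompact_Icc.exists_isMinOn
    (⟨0, by constructor <;> linarith⟩ : (Icc (-R) R).Nonempty) hgcont.continuousOn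
  have hmin : ∀ x, g xs ≤ g x := by
    intro x
    rcases le_or_gt (|x|) R with hxR | hxR
    · exact isMinOn_iff.mp hxs_min x (abs_le.mp hxR |> fun h => ⟨h.1, h.2⟩)
    · have h0mem : (0:ℝ) ∈ Icc (-R) R := by constructor <;> linarith
      have := isMinOn_iff.mp hxs_min 0 h0mem
      have := hcoer x hxR.le
      linarith
  -- integrability of shifted compositions
  have hIshift : ∀ c : ℝ, Integrable (fun ω => legendre Φ ((X ω + xs) + c)) P := by
    intro c
    exact (ipxa (xs + c)).congr (ae_of_all _ fun ω => by simp [add_assoc])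
  have hIshift' : ∀ c : ℝ, Integrable (fun ω => legendre Φ ((X ω + xs) - c)) P := by
    intro c
    exact (ipxa (xs - c)).congr (ae_of_all _ fun ω => by simp [add_sub_assoc])
  have hDpmeas : Measurable (fun ω => OCE.Dp Φ (X ω + xs)) :=
    (OCE.Dp_mono hΦ).measurable.comp (hXmeas.add_const xs)
  have hDmmeas : Measurable (fun ω => OCE.Dm Φ (X ω + xs)) :=
    (OCE.Dm_mono hΦ).measurable.comp (hXmeas.add_const xs)
  have hbound_int : Integrable (fun ω => |legendre Φ ((X ω + xs) + 1)| +
      2 * |legendre Φ (X ω + xs)| + |legendre Φ ((X ω + xs) - 1)|) P :=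
    (((hIshift 1).abs.add (((ipxa xs).abs).const_mul 2)).add (hIshift' 1).abs)
  have hDbound : ∀ (D : Ω → ℝ), (∀ ω, OCE.Dm Φ (X ω + xs) ≤ D ω) →
      (∀ ω, D ω ≤ OCE.Dp Φ (X ω + xs)) → Measurable D → Integrable D P := by
    intro D hDm hDp hDmeas
    refine Integrable.mono' hbound_int hDmeas.aestronglyMeasurable (ae_of_all _ fun ω => ?_)
    have h1 := OCE.Dp_le hΦ (X ω + xs)
    have h2 := OCE.Dm_ge hΦ (X ω + xs)
    have e1 := le_abs_self (legendre Φ ((X ω + xs) + 1))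
    have e2 := neg_abs_le (legendre Φ (X ω + xs))
    have e3 := le_abs_self (legendre Φ (X ω + xs))
    have e4 := le_abs_self (legendre Φ ((X ω + xs) - 1))
    have e5 := abs_nonneg (legendre Φ ((X ω + xs) + 1))
    have e6 := abs_nonneg (legendre Φ ((X ω + xs) - 1))
    rw [Real.norm_eq_abs, abs_le]
    constructor
    · linarith [hDm ω, h2]
    · linarith [hDp ω, h1]
  have hDp_int : Integrable (fun ω => OCE.Dp Φ (X ω + xs)) P :=
    hDbound _ (fun ω => OCE.Dm_le_Dp hΦ _) (fun ω => le_rfl) hDpmeas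
  have hDm_int : Integrable (fun ω => OCE.Dm Φ (X ω + xs)) P :=
    hDbound _ (fun ω => le_rfl) (fun ω => OCE.Dm_le_Dp hΦ _) hDmmeas
  -- right-derivative optimality bound : 1 ≤ ∫ Dp
  have hq_int : ∀ n : ℕ, Integrable (fun ω =>
      (legendre Φ ((X ω + xs) + 1 / (n + 1)) - legendre Φ (X ω + xs)) / (1 / (n + 1))) P :=
    fun n => ((hIshift _).sub (ipxa xs)).div_const _
  have step_r : ∀ n : ℕ, 1 ≤ ∫ ω,
      (legendre Φ ((X ω + xs) + 1 / (n + 1)) - legendre Φ (X ω + xs)) / (1 / (n + 1)) ∂P := by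
    intro n
    have hu := OCE.usq_pos n
    have hgle := hmin (xs + 1 / (n + 1))
    simp only [hg] at hgle
    have hEq : ∫ ω, legendre Φ (X ω + (xs + 1 / (n + 1))) ∂P
        = ∫ ω, legendre Φ ((X ω + xs) + 1 / (n + 1)) ∂P :=
      integral_congr_ae (ae_of_all _ fun ω => by simp [add_assoc])
    rw [hEq] at hgle
    rw [integral_div, integral_sub (hIshift _) (ipxa xs), le_div_iff₀ hu, one_mul]
    linarith
  have tend_r : Tendsto (fun n : ℕ => ∫ ω,
      (legendre Φ ((X ω + xs) + 1 / (n + 1)) - legendre Φ (X ω + xs)) / (1 / (n + 1)) ∂P)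
      atTop (𝓝 (∫ ω, OCE.Dp Φ (X ω + xs) ∂P)) := by
    refine integral_tendsto_of_tendsto_of_antitone hq_int hDp_int
      (ae_of_all _ fun ω => ?_) (ae_of_all _ fun ω => OCE.tendsto_right_slope hΦ (X ω + xs))
    intro n m hnm
    exact OCE.right_slope_le hΦ (OCE.usq_pos m) (OCE.usq_anti hnm)
  have hb : 1 ≤ ∫ ω, OCE.Dp Φ (X ω + xs) ∂P := ge_of_tendsto' tend_r step_r
  -- left-derivative optimality bound : ∫ Dm ≤ 1
  have hp_int : ∀ n : ℕ, Integrable (fun ω =>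
      (legendre Φ (X ω + xs) - legendre Φ ((X ω + xs) - 1 / (n + 1))) / (1 / (n + 1))) P :=
    fun n => ((ipxa xs).sub (hIshift' _)).div_const _
  have step_l : ∀ n : ℕ, (∫ ω,
      (legendre Φ (X ω + xs) - legendre Φ ((X ω + xs) - 1 / (n + 1))) / (1 / (n + 1)) ∂P) ≤ 1 := by
    intro n
    have hu := OCE.usq_pos n
    have hgle := hmin (xs - 1 / (n + 1))
    simp only [hg] at hgle
    have hEq : ∫ ω, legendre Φ (X ω + (xs - 1 / (n + 1))) ∂P
        = ∫ ω, legendre Φ ((X ω + xs) - 1 / (n + 1)) ∂P :=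
      integral_congr_ae (ae_of_all _ fun ω => by ring_nf)
    rw [hEq] at hgle
    rw [integral_div, integral_sub (ipxa xs) (hIshift' _), div_le_one hu]
    linarith
  have tend_l : Tendsto (fun n : ℕ => ∫ ω,
      (legendre Φ (X ω + xs) - legendre Φ ((X ω + xs) - 1 / (n + 1))) / (1 / (n + 1)) ∂P)
      atTop (𝓝 (∫ ω, OCE.Dm Φ (X ω + xs) ∂P)) := by
    refine integral_tendsto_of_tendsto_of_monotone hp_int hDm_int
      (ae_of_all _ fun ω => ?_) (ae_of_all _ fun ω => OCE.tendsto_left_slope hΦ (X ω + xs))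
    intro n m hnm
    exact OCE.left_slope_le hΦ (OCE.usq_pos m) (OCE.usq_anti hnm)
  have ha1 : (∫ ω, OCE.Dm Φ (X ω + xs) ∂P) ≤ 1 := le_of_tendsto' tend_l step_l
  -- the mixing parameter
  set A : ℝ := ∫ ω, OCE.Dm Φ (X ω + xs) ∂P with hA
  set B : ℝ := ∫ ω, OCE.Dp Φ (X ω + xs) ∂P with hB
  have hAB : A ≤ B := integral_mono hDm_int hDp_int fun ω => OCE.Dm_le_Dp hΦ _
  set l : ℝ := if A < B then (1 - A) / (B - A) else 0 with hldef
  have hl0 : 0 ≤ l := by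
    rw [hldef]
    split_ifs with h
    · exact div_nonneg (by linarith) (by linarith)
    · exact le_rfl
  have hl1 : l ≤ 1 := by
    rw [hldef]
    split_ifs with h
    · rw [div_le_one (by linarith)]; linarith
    · exact zero_le_one
  set Z : Ω → ℝ := fun ω => (1 - l) * OCE.Dm Φ (X ω + xs) + l * OCE.Dp Φ (X ω + xs) with hZdef
  have hZm : ∀ ω, OCE.Dm Φ (X ω + xs) ≤ Z ω := by
    intro ω
    have := OCE.Dm_le_Dp hΦ (X ω + xs)
    simp only [hZdef]
    nlinarith
  have hZp : ∀ ω, Z ω ≤ OCE.Dp Φ (X ω + xs) := by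
    intro ω
    have := OCE.Dm_le_Dp hΦ (X ω + xs)
    simp only [hZdef]
    nlinarith
  have hZnn : ∀ ω, 0 ≤ Z ω := fun ω => le_trans (OCE.Dm_nonneg hΦ _) (hZm ω)
  have hZmeas : Measurable Z := (hDmmeas.const_mul (1 - l)).add (hDpmeas.const_mul l)
  have hZint : Integrable Z P := (hDm_int.const_mul (1 - l)).add (hDp_int.const_mul l)
  have hIZ : ∫ ω, Z ω ∂P = 1 := by
    rw [hZdef]
    rw [integral_add (hDm_int.const_mul (1 - l)) (hDp_int.const_mul l),
      integral_const_mul, integral_const_mul, ← hA, ← hB]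
    rw [hldef]
    split_ifs with h
    · have hne : B - A ≠ 0 := sub_ne_zero.mpr h.ne'
      field_simp
      ring
    · have hABeq : A = B := le_antisymm hAB (not_lt.mp h)
      have : A = 1 := le_antisymm ha1 (hABeq ▸ hb)
      rw [← hABeq, this]; ring
  have hsubZ : ∀ ω, ∀ w : ℝ, legendre Φ (X ω + xs) + Z ω * (w - (X ω + xs)) ≤ legendre Φ w :=
    fun ω => OCE.subgrad hΦ (hZm ω) (hZp ω)
  have hFM : ∀ ω, Φ (Z ω) ≠ ⊤ ∧ (Φ (Z ω)).toReal = Z ω * (X ω + xs) - legendre Φ (X ω + xs) :=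
    fun ω => OCE.fenchelMoreau hΦ (hZnn ω) (hsubZ ω)
  set G : Ω → ℝ := fun ω => Z ω * (X ω + xs) - legendre Φ (X ω + xs) with hGdef
  have hGnn : ∀ ω, 0 ≤ G ω := fun ω => by
    have h := (hFM ω).2
    have := ENNReal.toReal_nonneg (a := Φ (Z ω))
    simp only [hGdef]
    linarith
  have hGmeas : Measurable G :=
    (hZmeas.mul (hXmeas.add_const xs)).sub
      ((OCE.legendre_mono hΦ).measurable.comp (hXmeas.add_const xs))
  have hI2y : Integrable (fun ω => legendre Φ (2 * (X ω + xs))) P := by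
    refine (OCE.integrable_psi_comp hΦ hXmeas hXOrlicz (2 * xs) two_pos).congr
      (ae_of_all _ fun ω => by ring_nf)
  have hGint : Integrable G P := by
    refine Integrable.mono' (g := fun ω =>
      |legendre Φ (2 * (X ω + xs))| + 2 * |legendre Φ (X ω + xs)|)
      (hI2y.abs.add (((ipxa xs).abs).const_mul 2)) hGmeas.aestronglyMeasurable
      (ae_of_all _ fun ω => ?_)
    have hkey := hsubZ ω (2 * (X ω + xs))
    have ha2 := le_abs_self (legendre Φ (2 * (X ω + xs)))
    have ha3 := neg_abs_le (legendre Φ (X ω + xs))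
    have ha4 := le_abs_self (legendre Φ (X ω + xs))
    rw [Real.norm_eq_abs, abs_of_nonneg (hGnn ω)]
    simp only [hGdef]
    nlinarith
  -- the optimal measure
  set dens : Ω → ℝ≥0 := fun ω => (Z ω).toNNReal with hdensdef
  have hdens_meas : Measurable dens := hZmeas.real_toNNReal
  set Q : Measure Ω := P.withDensity (fun ω => (dens ω : ℝ≥0∞)) with hQdef
  have hofReal : (fun ω => ((dens ω : ℝ≥0∞))) = fun ω => ENNReal.ofReal (Z ω) := rfl
  have hQuniv : Q univ = 1 := by
    rw [hQdef, withDensity_apply _ MeasurableSet.univ, setLIntegral_univ, hofReal,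
      ← ofReal_integral_eq_lintegral_ofReal hZint (ae_of_all _ hZnn), hIZ, ENNReal.ofReal_one]
  have hQprob : IsProbabilityMeasure Q := ⟨hQuniv⟩
  have hQac : Q ≪ P := withDensity_absolutelyContinuous _ _
  have hrn : Q.rnDeriv P =ᵐ[P] fun ω => (dens ω : ℝ≥0∞) := by
    rw [hQdef]
    exact Measure.rnDeriv_withDensity P hdens_meas.coe_nnreal_ennreal
  have hWZ : (fun ω => (Q.rnDeriv P ω).toReal) =ᵐ[P] Z := by
    filter_upwards [hrn] with ω h
    rw [h]
    simp only [hdensdef, ENNReal.coe_toReal]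
    exact Real.coe_toNNReal _ (hZnn ω)
  have hlint : ∫⁻ ω, Φ ((Q.rnDeriv P ω).toReal) ∂P = ENNReal.ofReal (∫ ω, G ω ∂P) := by
    have h1 : ∫⁻ ω, Φ ((Q.rnDeriv P ω).toReal) ∂P = ∫⁻ ω, ENNReal.ofReal (G ω) ∂P := by
      refine lintegral_congr_ae ?_
      filter_upwards [hWZ] with ω h
      rw [h, ← ENNReal.ofReal_toReal (hFM ω).1, (hFM ω).2]
    rw [h1, ← ofReal_integral_eq_lintegral_ofReal hGint (ae_of_all _ hGnn)]
  have hfinQ : (∫⁻ ω, Φ ((Q.rnDeriv P ω).toReal) ∂P) ≠ ⊤ := by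
    rw [hlint]; exact ENNReal.ofReal_ne_top
  have hZy_int : Integrable (fun ω => Z ω * (X ω + xs)) P := by
    have he : (fun ω => Z ω * (X ω + xs)) = fun ω => G ω + legendre Φ (X ω + xs) := by
      funext ω
      simp only [hGdef]
      ring
    rw [he]
    exact hGint.add (ipxa xs)
  have hZXint : Integrable (fun ω => Z ω * X ω) P := by
    have he : (fun ω => Z ω * X ω) = fun ω => Z ω * (X ω + xs) - xs * Z ω := by
      funext ω
      ring
    rw [he]
    exact hZy_int.sub (hZint.const_mul xs)
  have hIXQ : ∫ ω, X ω ∂Q = ∫ ω, Z ω * X ω ∂P := by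
    rw [hQdef, integral_withDensity_eq_integral_smul hdens_meas]
    refine integral_congr_ae (ae_of_all _ fun ω => ?_)
    simp only [hdensdef, NNReal.smul_def, smul_eq_mul, Real.coe_toNNReal _ (hZnn ω)]
  have hmem : g xs ∈ {s : ℝ | ∃ Q : Measure Ω, IsProbabilityMeasure Q ∧ Q ≪ P ∧
      (∫⁻ ω, Φ ((Q.rnDeriv P ω).toReal) ∂P) ≠ ⊤ ∧
      s = (∫ ω, X ω ∂Q) - (∫⁻ ω, Φ ((Q.rnDeriv P ω).toReal) ∂P).toReal} := by
    refine ⟨Q, hQprob, hQac, hfinQ, ?_⟩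
    rw [hIXQ, hlint, ENNReal.toReal_ofReal (integral_nonneg hGnn),
      ← integral_sub hZXint hGint]
    have hpt : ∀ ω, Z ω * X ω - G ω = legendre Φ (X ω + xs) - xs * Z ω := by
      intro ω
      simp only [hGdef]
      ring
    rw [integral_congr_ae (ae_of_all _ hpt), integral_sub (ipxa xs) (hZint.const_mul xs),
      integral_const_mul, hIZ, mul_one]
  have hub : ∀ s ∈ {s : ℝ | ∃ Q : Measure Ω, IsProbabilityMeasure Q ∧ Q ≪ P ∧
      (∫⁻ ω, Φ ((Q.rnDeriv P ω).toReal) ∂P) ≠ ⊤ ∧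
      s = (∫ ω, X ω ∂Q) - (∫⁻ ω, Φ ((Q.rnDeriv P ω).toReal) ∂P).toReal}, s ≤ g xs := by
    rintro s ⟨Q', hQ'p, hQ'ac, hfin', rfl⟩
    exact OCE.weak_duality hΦ hXmeas hXOrlicz xs hQ'p hQ'ac hfin'
  have hSup : divergenceRisk P Φ X = g xs := by
    rw [divergenceRisk]
    exact le_antisymm (csSup_le ⟨g xs, hmem⟩ hub) (le_csSup ⟨g xs, hub⟩ hmem)
  have hInf : (⨅ x : ℝ, ((∫ ω, legendre Φ (X ω + x) ∂P) - x)) = g xs := by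
    refine le_antisymm ?_ ?_
    · exact ciInf_le ⟨g xs, by rintro _ ⟨x, rfl⟩; exact hmin x⟩ xs
    · exact le_ciInf hmin
  rw [hSup, hInf]
end
end

section
/- Under assumptions (A1)–(A3), the mapping f : Θ × ℝ → ℝ, f(θ,x) := E[Φ*(G(θ,Z₁) + x) − x], is lower semicontinuous, and its set S̄ of minimizers over Θ × ℝ is nonvoid and compact. -/
open MeasureTheory Filter Topology Set
open scoped ENNReal NNReal

noncomputable section

/-- Left-continuous quantile function of a distribution function `F`. -/
def leftQuantile (F : ℝ → ℝ) (u : ℝ) : ℝ := sInf {t : ℝ | u ≤ F t}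

/-- Right-continuous quantile function of a distribution function `F`. -/
def rightQuantile (F : ℝ → ℝ) (u : ℝ) : ℝ := sInf {t : ℝ | u < F t}

/-- `𝓡_{ρ^Φ}(F) = inf_{x ∈ ℝ} (∫_{(0,1)} Φ*(F^←(u) + x) du - x)`. -/
def RhoPhi (Φ : ℝ → ℝ≥0∞) (F : ℝ → ℝ) : ℝ :=
  ⨅ x : ℝ, ((∫ u in Set.Ioo (0:ℝ) 1, legendre Φ (leftQuantile F u + x)) - x)

/-- `M_F`: the set of minimizers in the definition of `𝓡_{ρ^Φ}(F)`. -/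
def MPhi (Φ : ℝ → ℝ≥0∞) (F : ℝ → ℝ) : Set ℝ :=
  {x : ℝ | ((∫ u in Set.Ioo (0:ℝ) 1, legendre Φ (leftQuantile F u + x)) - x) = RhoPhi Φ F}

/-- The Euclidean norm distance on `ℝ^m × ℝ ≅ ℝ^{m+1}`. -/
def pairdist {m : ℕ} (p q : EuclideanSpace ℝ (Fin m) × ℝ) : ℝ :=
  Real.sqrt (‖p.1 - q.1‖ ^ 2 + (p.2 - q.2) ^ 2)

/-- The Euclidean norm on `ℝ^m × ℝ ≅ ℝ^{m+1}`. -/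
def pnorm {m : ℕ} (p : EuclideanSpace ℝ (Fin m) × ℝ) : ℝ :=
  Real.sqrt (‖p.1‖ ^ 2 + p.2 ^ 2)

/-- The SAA objective `X_n(ω,θ,x) = (1/n) ∑_{i<n} (Φ*(G(θ, Z_i(ω)) + x) - x)`. -/
def saaObj {Ω : Type*} {m d : ℕ} (Φ : ℝ → ℝ≥0∞)
    (G : EuclideanSpace ℝ (Fin m) → EuclideanSpace ℝ (Fin d) → ℝ)
    (Z : ℕ → Ω → EuclideanSpace ℝ (Fin d)) (n : ℕ) (ω : Ω)
    (θ : EuclideanSpace ℝ (Fin m)) (x : ℝ) : ℝ :=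
  (n : ℝ)⁻¹ * ∑ i ∈ Finset.range n, (legendre Φ (G θ (Z i ω) + x) - x)

/-- The empirical distribution function `F̂_{n,θ}(ω)` of `G(θ,Z₁(ω)),…,G(θ,Z_n(ω))`. -/
def empCDF {Ω : Type*} {m d : ℕ}
    (G : EuclideanSpace ℝ (Fin m) → EuclideanSpace ℝ (Fin d) → ℝ)
    (Z : ℕ → Ω → EuclideanSpace ℝ (Fin d)) (n : ℕ)
    (θ : EuclideanSpace ℝ (Fin m)) (ω : Ω) (t : ℝ) : ℝ :=
  (n : ℝ)⁻¹ * ∑ i ∈ Finset.range n, if G θ (Z i ω) ≤ t then (1:ℝ) else 0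

/-- The distribution function `F_θ` of `G(θ,Z)` where `Z ∼ μZ`. -/
def cdfOf {m d : ℕ} (μZ : Measure (EuclideanSpace ℝ (Fin d)))
    (G : EuclideanSpace ℝ (Fin m) → EuclideanSpace ℝ (Fin d) → ℝ)
    (θ : EuclideanSpace ℝ (Fin m)) (t : ℝ) : ℝ :=
  (μZ {z | G θ z ≤ t}).toReal

/-- `argmin 𝓡_{ρ^Φ}`: the solution set of the genuine risk averse problem
`inf_{θ ∈ Θ} 𝓡_{ρ^Φ}(F_θ)`. -/
def argminRho {m d : ℕ} (Φ : ℝ → ℝ≥0∞) (μZ : Measure (EuclideanSpace ℝ (Fin d)))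
    (G : EuclideanSpace ℝ (Fin m) → EuclideanSpace ℝ (Fin d) → ℝ)
    (Θ : Set (EuclideanSpace ℝ (Fin m))) : Set (EuclideanSpace ℝ (Fin m)) :=
  {θ ∈ Θ | RhoPhi Φ (cdfOf μZ G θ) = ⨅ θ' : Θ, RhoPhi Φ (cdfOf μZ G θ')}

/-- `S_{n,ρ}(ω)`: the solution set of `inf_{θ ∈ Θ} 𝓡_{ρ^Φ}(F̂_{n,θ})(ω)`. -/
def SnRho {Ω : Type*} {m d : ℕ} (Φ : ℝ → ℝ≥0∞)
    (G : EuclideanSpace ℝ (Fin m) → EuclideanSpace ℝ (Fin d) → ℝ)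
    (Z : ℕ → Ω → EuclideanSpace ℝ (Fin d))
    (Θ : Set (EuclideanSpace ℝ (Fin m))) (n : ℕ) (ω : Ω) :
    Set (EuclideanSpace ℝ (Fin m)) :=
  {θ ∈ Θ | RhoPhi Φ (empCDF G Z n θ ω) = ⨅ θ' : Θ, RhoPhi Φ (empCDF G Z n θ' ω)}

/-- `S_n(ω)`: minimizers of the SAA objective over `Θ × ℝ`. -/
def SnSet {Ω : Type*} {m d : ℕ} (Φ : ℝ → ℝ≥0∞)
    (G : EuclideanSpace ℝ (Fin m) → EuclideanSpace ℝ (Fin d) → ℝ)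
    (Z : ℕ → Ω → EuclideanSpace ℝ (Fin d))
    (Θ : Set (EuclideanSpace ℝ (Fin m))) (n : ℕ) (ω : Ω) :
    Set (EuclideanSpace ℝ (Fin m) × ℝ) :=
  {p : EuclideanSpace ℝ (Fin m) × ℝ | p.1 ∈ Θ ∧
    ∀ θ ∈ Θ, ∀ x : ℝ, saaObj Φ G Z n ω p.1 p.2 ≤ saaObj Φ G Z n ω θ x}

/-- `S̄`: minimizers of `(θ,x) ↦ E[Φ*(G(θ,Z₁)+x) - x]` over `Θ × ℝ`. -/
def SbarSet {m d : ℕ} (Φ : ℝ → ℝ≥0∞) (μZ : Measure (EuclideanSpace ℝ (Fin d)))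
    (G : EuclideanSpace ℝ (Fin m) → EuclideanSpace ℝ (Fin d) → ℝ)
    (Θ : Set (EuclideanSpace ℝ (Fin m))) : Set (EuclideanSpace ℝ (Fin m) × ℝ) :=
  {p : EuclideanSpace ℝ (Fin m) × ℝ | p.1 ∈ Θ ∧
    ∀ θ ∈ Θ, ∀ x : ℝ,
      (∫ z, (legendre Φ (G p.1 z + p.2) - p.2) ∂μZ) ≤ ∫ z, (legendre Φ (G θ z + x) - x) ∂μZ}

namespace PhiAssumptions

variable {Φ : ℝ → ℝ≥0∞} (hΦ : PhiAssumptions Φ)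
include hΦ

lemma set_nonempty (y : ℝ) :
    {s : ℝ | ∃ x : ℝ, 0 ≤ x ∧ Φ x ≠ ⊤ ∧ s = x * y - (Φ x).toReal}.Nonempty :=
  ⟨0 * y - (Φ 0).toReal, 0, le_refl 0, hΦ.finite_zero, rfl⟩

lemma set_bddAbove (y : ℝ) :
    BddAbove {s : ℝ | ∃ x : ℝ, 0 ≤ x ∧ Φ x ≠ ⊤ ∧ s = x * y - (Φ x).toReal} := by
  have h := hΦ.superlinear.eventually (Ioi_mem_nhds (show ENNReal.ofReal (|y| + 1) < ⊤ from ENNReal.ofReal_lt_top))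
  rcases (eventually_atTop.1 h) with ⟨X, hX⟩
  set X' := max (max X 1) 0 with hX'
  refine ⟨max 0 (X' * |y|), ?_⟩
  rintro s ⟨x, hx0, hfin, rfl⟩
  rcases le_or_gt X' x with hbig | hsmall
  · have hx1 : (1:ℝ) ≤ x := le_trans (le_trans (le_max_right X 1) (le_max_left _ _)) hbig
    have hdiv : ENNReal.ofReal (|y| + 1) < Φ x / ENNReal.ofReal x :=
      hX x (le_trans (le_trans (le_max_left X 1) (le_max_left _ _)) hbig)
    have hxne : ENNReal.ofReal x ≠ 0 := by
      simp [ENNReal.ofReal_eq_zero]; linarith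
    have hmul : ENNReal.ofReal (|y| + 1) * ENNReal.ofReal x ≤ Φ x := by
      rw [← ENNReal.le_div_iff_mul_le (Or.inl hxne) (Or.inl ENNReal.ofReal_ne_top)]
      exact hdiv.le
    have : (|y| + 1) * x ≤ (Φ x).toReal := by
      have := ENNReal.toReal_mono hfin hmul
      rwa [← ENNReal.ofReal_mul (by positivity), ENNReal.toReal_ofReal (by positivity)] at this
    have hxy : x * y ≤ x * |y| := mul_le_mul_of_nonneg_left (le_abs_self y) hx0
    have : x * y - (Φ x).toReal ≤ 0 := by nlinarith [abs_nonneg y]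
    exact le_trans this (le_max_left _ _)
  · have h1 : x * y - (Φ x).toReal ≤ x * |y| := by
      have : x * y ≤ x * |y| := mul_le_mul_of_nonneg_left (le_abs_self y) hx0
      have h2 : (0:ℝ) ≤ (Φ x).toReal := ENNReal.toReal_nonneg
      linarith
    have : x * |y| ≤ X' * |y| := mul_le_mul_of_nonneg_right hsmall.le (abs_nonneg y)
    exact le_trans h1 (le_trans this (le_max_right _ _))

lemma le_legendre {y x : ℝ} (hx : 0 ≤ x) (hfin : Φ x ≠ ⊤) :
    x * y - (Φ x).toReal ≤ legendre Φ y :=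
  le_csSup (hΦ.set_bddAbove y) ⟨x, hx, hfin, rfl⟩

lemma legendre_le {y c : ℝ} (h : ∀ x : ℝ, 0 ≤ x → Φ x ≠ ⊤ → x * y - (Φ x).toReal ≤ c) :
    legendre Φ y ≤ c :=
  csSup_le (hΦ.set_nonempty y) (by rintro s ⟨x, hx0, hfin, rfl⟩; exact h x hx0 hfin)

lemma legendre_mono : Monotone (legendre Φ) := by
  intro y1 y2 hy
  refine hΦ.legendre_le fun x hx0 hfin => ?_
  have : x * y1 ≤ x * y2 := mul_le_mul_of_nonneg_left hy hx0
  exact le_trans (by linarith) (hΦ.le_legendre hx0 hfin)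

lemma neg_le_legendre (y : ℝ) : -(Φ 0).toReal ≤ legendre Φ y := by
  simpa using hΦ.le_legendre (y := y) (le_refl 0) hΦ.finite_zero

lemma legendre_convex (y1 y2 t : ℝ) (ht0 : 0 ≤ t) (ht1 : t ≤ 1) :
    legendre Φ (t * y1 + (1 - t) * y2) ≤ t * legendre Φ y1 + (1 - t) * legendre Φ y2 := by
  refine hΦ.legendre_le fun x hx0 hfin => ?_
  have h1 : t * (x * y1 - (Φ x).toReal) ≤ t * legendre Φ y1 :=
    mul_le_mul_of_nonneg_left (hΦ.le_legendre hx0 hfin) ht0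
  have h2 : (1 - t) * (x * y2 - (Φ x).toReal) ≤ (1 - t) * legendre Φ y2 :=
    mul_le_mul_of_nonneg_left (hΦ.le_legendre hx0 hfin) (by linarith)
  nlinarith

lemma legendre_add_le (a b : ℝ) :
    legendre Φ (a + b) ≤ (legendre Φ (2 * a) + legendre Φ (2 * b)) / 2 := by
  have := hΦ.legendre_convex (2 * a) (2 * b) (1/2) (by norm_num) (by norm_num)
  have he : (1/2 : ℝ) * (2 * a) + (1 - 1/2) * (2 * b) = a + b := by ring
  rw [he] at this
  linarith

lemma legendre_lsc : LowerSemicontinuous (legendre Φ) := by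
  intro y c hc
  obtain ⟨s, ⟨x, hx0, hfin, rfl⟩, hcs⟩ := exists_lt_of_lt_csSup (hΦ.set_nonempty y) hc
  have hcont : Continuous fun y' : ℝ => x * y' - (Φ x).toReal := by continuity
  have : ∀ᶠ y' in 𝓝 y, c < x * y' - (Φ x).toReal :=
    (hcont.tendsto y).eventually (eventually_gt_nhds hcs)
  exact this.mono fun y' hy' => lt_of_lt_of_le hy' (hΦ.le_legendre hx0 hfin)

lemma legendre_measurable : Measurable (legendre Φ) := hΦ.legendre_mono.measurable

lemma coercive_le_legendre {x₀ : ℝ} (hx₀ : 1 < x₀) (hfin : Φ x₀ ≠ ⊤) (y : ℝ) :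
    x₀ * y - (Φ x₀).toReal ≤ legendre Φ y :=
  hΦ.le_legendre (by linarith) hfin

end PhiAssumptions



lemma lsc_exists_min {α : Type*} [TopologicalSpace α] [FirstCountableTopology α]
    {K : Set α} (hK : IsCompact K) (hne : K.Nonempty) {f : α → ℝ}
    (hf : LowerSemicontinuousOn f K) : ∃ p ∈ K, ∀ q ∈ K, f p ≤ f q := by
  by_cases hbd : BddBelow (f '' K)
  · set m := sInf (f '' K) with hm
    have hsel : ∀ n : ℕ, ∃ p ∈ K, f p < m + 1 / (n + 1) := by
      intro n
      have hlt : m < m + 1 / (n + 1) := by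
        have : (0:ℝ) < 1 / (n + 1) := by positivity
        linarith
      obtain ⟨s, ⟨p, hp, rfl⟩, hs⟩ := exists_lt_of_csInf_lt (hne.image f) hlt
      exact ⟨p, hp, hs⟩
    choose u hu hfu using hsel
    obtain ⟨q, hqK, φ, hφ, htend⟩ := hK.tendsto_subseq hu
    refine ⟨q, hqK, fun q' hq' => ?_⟩
    have hq'm : m ≤ f q' := csInf_le hbd ⟨q', hq', rfl⟩
    by_contra hcon
    push_neg at hcon
    have hmq : m < f q := lt_of_le_of_lt hq'm hcon
    obtain ⟨c, hc1, hc2⟩ := exists_between hmq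
    have hev : ∀ᶠ k in atTop, c < f (u (φ k)) := by
      have htend' : Tendsto (fun k => u (φ k)) atTop (𝓝[K] q) :=
        tendsto_nhdsWithin_of_tendsto_nhds_of_eventually_within _ htend
          (Eventually.of_forall fun k => hu (φ k))
      exact htend' (hf q hqK c hc2)
    have hev2 : ∀ᶠ k in atTop, f (u (φ k)) < c := by
      have h1 : Tendsto (fun k : ℕ => m + 1 / ((φ k : ℝ) + 1)) atTop (𝓝 (m + 0)) := by
        refine tendsto_const_nhds.add ?_
        have : Tendsto (fun k : ℕ => ((φ k : ℝ) + 1)) atTop atTop :=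
          (tendsto_natCast_atTop_atTop.comp hφ.tendsto_atTop).atTop_add tendsto_const_nhds
        simp only [one_div]; exact this.inv_tendsto_atTop
      rw [add_zero] at h1
      filter_upwards [h1.eventually (eventually_lt_nhds hc1)] with k hk
      exact lt_trans (hfu (φ k)) hk
    obtain ⟨k, hk1, hk2⟩ := (hev.and hev2).exists
    exact absurd hk1 (not_lt.2 hk2.le)
  · exfalso
    have hsel : ∀ n : ℕ, ∃ p ∈ K, f p < -n := by
      intro n
      by_contra hcon
      push_neg at hcon
      exact hbd ⟨-n, by rintro s ⟨p, hp, rfl⟩; exact hcon p hp⟩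
    choose u hu hfu using hsel
    obtain ⟨q, hqK, φ, hφ, htend⟩ := hK.tendsto_subseq hu
    have hev : ∀ᶠ k in atTop, f q - 1 < f (u (φ k)) := by
      have htend' : Tendsto (fun k => u (φ k)) atTop (𝓝[K] q) :=
        tendsto_nhdsWithin_of_tendsto_nhds_of_eventually_within _ htend
          (Eventually.of_forall fun k => hu (φ k))
      exact htend' (hf q hqK (f q - 1) (by linarith))
    have hev2 : ∀ᶠ k in atTop, f (u (φ k)) ≤ f q - 1 := by
      have : ∀ᶠ k in atTop, (1:ℝ) - f q ≤ (φ k : ℝ) := by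
        have h2 : Tendsto (fun k : ℕ => (φ k : ℝ)) atTop atTop :=
          tendsto_natCast_atTop_atTop.comp hφ.tendsto_atTop
        exact h2.eventually_ge_atTop _
      filter_upwards [this] with k hk
      have := hfu (φ k)
      linarith
    obtain ⟨k, hk1, hk2⟩ := (hev.and hev2).exists
    linarith

/-- Under (A 1)–(A 3), the mapping
`f(θ,x) = E[Φ*(G(θ,Z₁)+x) - x]` is lower semicontinuous on `Θ × ℝ` and its set `S̄` of
minimizers over `Θ × ℝ` is nonvoid and compact. -/
theorem limit_objective_lsc_argmin_nonempty_compact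
    {Ω : Type*} [MeasurableSpace Ω] (P : Measure Ω) [IsProbabilityMeasure P]
    (hAtomless : ∀ A : Set Ω, MeasurableSet A → P A ≠ 0 →
      ∃ B : Set Ω, B ⊆ A ∧ MeasurableSet B ∧ P B ≠ 0 ∧ P B ≠ P A)
    {m d : ℕ} (Θ : Set (EuclideanSpace ℝ (Fin m))) (hΘc : IsCompact Θ) (hΘne : Θ.Nonempty)
    (Φ : ℝ → ℝ≥0∞) (hΦ : PhiAssumptions Φ)
    (Z : ℕ → Ω → EuclideanSpace ℝ (Fin d)) (hZmeas : ∀ i, Measurable (Z i))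
    (μZ : Measure (EuclideanSpace ℝ (Fin d))) [IsProbabilityMeasure μZ]
    (hZlaw : ∀ i, P.map (Z i) = μZ)
    (hZindep : ProbabilityTheory.iIndepFun Z P)
    (G : EuclideanSpace ℝ (Fin m) → EuclideanSpace ℝ (Fin d) → ℝ)
    (hA1meas : Measurable fun p : Θ × EuclideanSpace ℝ (Fin d) => G p.1 p.2)
    (hA1lsc : ∀ z, LowerSemicontinuousOn (fun θ => G θ z) Θ)
    (ξ₁ : EuclideanSpace ℝ (Fin d) → ℝ) (hξ₁ : Integrable ξ₁ μZ)
    (hA2 : ∀ θ ∈ Θ, ∀ z, |G θ z| ≤ ξ₁ z)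
    (hA3mem : ∀ θ ∈ Θ, ∀ c : ℝ, 0 < c → Integrable (fun z => legendre Φ (c * |G θ z|)) μZ)
    (ξ₂ : EuclideanSpace ℝ (Fin d) → ℝ) (hξ₂ : Integrable ξ₂ μZ)
    (hA3 : ∀ θ ∈ Θ, ∀ z, |legendre Φ (G θ z)| ≤ ξ₂ z)
 :
    LowerSemicontinuousOn
      (fun p : EuclideanSpace ℝ (Fin m) × ℝ => ∫ z, (legendre Φ (G p.1 z + p.2) - p.2) ∂μZ)
      (Θ ×ˢ (Set.univ : Set ℝ)) ∧
    (SbarSet Φ μZ G Θ).Nonempty ∧ IsCompact (SbarSet Φ μZ G Θ) := by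
  classical
  set s : Set (EuclideanSpace ℝ (Fin m) × ℝ) := Θ ×ˢ (Set.univ : Set ℝ) with hs
  set f : EuclideanSpace ℝ (Fin m) × ℝ → ℝ :=
    fun p => ∫ z, (legendre Φ (G p.1 z + p.2) - p.2) ∂μZ with hfdef
  have hGm : ∀ θ' ∈ Θ, Measurable fun z => G θ' z := by
    intro θ' hθ'
    have hpair : Measurable fun z : EuclideanSpace ℝ (Fin d) => ((⟨θ', hθ'⟩ : Θ), z) :=
      measurable_const.prodMk measurable_id
    exact hA1meas.comp hpair
  have C0nn : (0:ℝ) ≤ (Φ 0).toReal := ENNReal.toReal_nonneg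
  have hInt : ∀ θ' ∈ Θ, ∀ x' : ℝ, Integrable (fun z => legendre Φ (G θ' z + x')) μZ := by
    intro θ' hθ' x'
    have hmeas : Measurable fun z => legendre Φ (G θ' z + x') :=
      hΦ.legendre_measurable.comp ((hGm θ' hθ').add_const x')
    have hb : Integrable (fun z =>
        (legendre Φ (2 * |G θ' z|) + (Φ 0).toReal) / 2
        + ((legendre Φ (2 * |x'|) + (Φ 0).toReal) / 2 + (Φ 0).toReal)) μZ :=
      (((hA3mem θ' hθ' 2 two_pos).add (integrable_const _)).div_const 2).add (integrable_const _)
    refine hb.mono' hmeas.aestronglyMeasurable (Filter.Eventually.of_forall fun z => ?_)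
    rw [Real.norm_eq_abs, abs_le]
    have hg1 := hΦ.neg_le_legendre (G θ' z + x')
    have hg2 := hΦ.neg_le_legendre (2 * |G θ' z|)
    have hg3 := hΦ.neg_le_legendre (2 * |x'|)
    constructor
    · linarith
    · have h1 := hΦ.legendre_add_le (G θ' z) x'
      have h2 : legendre Φ (2 * G θ' z) ≤ legendre Φ (2 * |G θ' z|) :=
        hΦ.legendre_mono (by nlinarith [le_abs_self (G θ' z)])
      have h3 : legendre Φ (2 * x') ≤ legendre Φ (2 * |x'|) :=
        hΦ.legendre_mono (by nlinarith [le_abs_self x'])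
      linarith
  have hfval : ∀ q : EuclideanSpace ℝ (Fin m) × ℝ, q.1 ∈ Θ →
      f q = (∫ z, legendre Φ (G q.1 z + q.2) ∂μZ) - q.2 := by
    intro q hq
    rw [hfdef]
    simp only
    rw [integral_sub (hInt q.1 hq q.2) (integrable_const q.2), integral_const]
    simp [measure_univ]
  -- Lower semicontinuity
  have hlsc : LowerSemicontinuousOn f s := by
    rintro p hp c hc
    by_contra hcon
    rw [Filter.not_eventually] at hcon
    have hcon' : ∃ᶠ q in 𝓝[s] p, f q ≤ c ∧ q ∈ s := by
      refine (hcon.and_eventually eventually_mem_nhdsWithin).mono ?_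
      exact fun q hq => ⟨not_lt.1 hq.1, hq.2⟩
    obtain ⟨Q, hQtend, hQ⟩ := Filter.exists_seq_forall_of_frequently hcon'
    have hQc : ∀ n, f (Q n) ≤ c := fun n => (hQ n).1
    have hQΘ : ∀ n, (Q n).1 ∈ Θ := fun n => ((hQ n).2).1
    have hQnhds : Tendsto Q atTop (𝓝 p) := hQtend.mono_right nhdsWithin_le_nhds
    have hθt : Tendsto (fun n => (Q n).1) atTop (𝓝[Θ] p.1) := by
      apply tendsto_nhdsWithin_of_tendsto_nhds_of_eventually_within
      · exact (continuous_fst.tendsto p).comp hQnhds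
      · exact Filter.Eventually.of_forall fun n => hQΘ n
    have hxt : Tendsto (fun n => (Q n).2) atTop (𝓝 p.2) :=
      (continuous_snd.tendsto p).comp hQnhds
    have hθΘ : p.1 ∈ Θ := hp.1
    set K : ℝ := (Φ 0).toReal + |c| + |p.2| + 1 with hK
    have hKC0 : (Φ 0).toReal ≤ K := by
      have := abs_nonneg c; have := abs_nonneg p.2; linarith
    have hcxK : 0 < c + p.2 + K := by
      have := neg_abs_le c; have := neg_abs_le p.2; linarith
    have hg_nonneg : ∀ (θ' : EuclideanSpace ℝ (Fin m)) (x' : ℝ) (z : EuclideanSpace ℝ (Fin d)),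
        0 ≤ legendre Φ (G θ' z + x') + K := by
      intro θ' x' z
      have := hΦ.neg_le_legendre (G θ' z + x'); linarith
    have hFnmeas : ∀ n, Measurable fun z =>
        ENNReal.ofReal (legendre Φ (G (Q n).1 z + (Q n).2) + K) := by
      intro n
      exact ENNReal.measurable_ofReal.comp
        ((hΦ.legendre_measurable.comp (((hGm _ (hQΘ n)).add_const _))).add_const K)
    have hpoint : ∀ z, ENNReal.ofReal (legendre Φ (G p.1 z + p.2) + K) ≤
        Filter.liminf (fun n => ENNReal.ofReal (legendre Φ (G (Q n).1 z + (Q n).2) + K)) atTop := by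
      intro z
      set y := G p.1 z + p.2 with hy
      have claim1 : ∀ c' : ℝ, c' < legendre Φ y →
          ∀ᶠ n in atTop, c' < legendre Φ (G (Q n).1 z + (Q n).2) := by
        intro c' hc'
        obtain ⟨ε, hε, hball⟩ := Metric.eventually_nhds_iff.1 (hΦ.legendre_lsc y c' hc')
        have hψε : c' < legendre Φ (y - ε/2) := by
          apply hball
          rw [Real.dist_eq]
          rw [abs_of_nonpos (by linarith)]
          linarith
        have h1 : ∀ᶠ n in atTop, G p.1 z - ε/4 < G (Q n).1 z :=
          hθt (hA1lsc z p.1 hθΘ (G p.1 z - ε/4) (by linarith))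
        have h2 : ∀ᶠ n in atTop, p.2 - ε/4 < (Q n).2 :=
          hxt (eventually_gt_nhds (by linarith))
        filter_upwards [h1, h2] with n hn1 hn2
        have hle : y - ε/2 ≤ G (Q n).1 z + (Q n).2 := by rw [hy]; linarith
        exact lt_of_lt_of_le hψε (hΦ.legendre_mono hle)
      have claim2 : ∀ c' : ℝ, c' < legendre Φ y → ENNReal.ofReal (c' + K) ≤
          Filter.liminf (fun n => ENNReal.ofReal (legendre Φ (G (Q n).1 z + (Q n).2) + K)) atTop := by
        intro c' hc'
        refine Filter.le_liminf_of_le (by isBoundedDefault) ?_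
        filter_upwards [claim1 c' hc'] with n hn
        exact ENNReal.ofReal_le_ofReal (by linarith)
      have hseq : Tendsto (fun k : ℕ => ENNReal.ofReal ((legendre Φ y - 1/(k+1)) + K)) atTop
          (𝓝 (ENNReal.ofReal (legendre Φ y + K))) := by
        apply ENNReal.tendsto_ofReal
        have h0 : Tendsto (fun k : ℕ => 1/((k:ℝ)+1)) atTop (𝓝 0) := by
          have hdiv : Tendsto (fun k : ℕ => ((k:ℝ)+1)) atTop atTop :=
            (tendsto_natCast_atTop_atTop (R := ℝ)).atTop_add tendsto_const_nhds
          simp only [one_div]; exact hdiv.inv_tendsto_atTop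
        have h1 : Tendsto (fun k : ℕ => (legendre Φ y - 1/((k:ℝ)+1)) + K) atTop
            (𝓝 ((legendre Φ y - 0) + K)) :=
          (tendsto_const_nhds.sub h0).add tendsto_const_nhds
        simpa using h1
      refine le_of_tendsto hseq (Filter.Eventually.of_forall fun k => ?_)
      refine claim2 _ ?_
      have : (0:ℝ) < 1/((k:ℝ)+1) := by positivity
      linarith
    have hgint : Integrable (fun z => legendre Φ (G p.1 z + p.2) + K) μZ :=
      (hInt p.1 hθΘ p.2).add (integrable_const K)
    have hfpval := hfval p hθΘ
    have e1 : ENNReal.ofReal ((f p + p.2) + K)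
        = ∫⁻ z, ENNReal.ofReal (legendre Φ (G p.1 z + p.2) + K) ∂μZ := by
      rw [← ofReal_integral_eq_lintegral_ofReal hgint
        (Filter.Eventually.of_forall (hg_nonneg p.1 p.2))]
      congr 1
      rw [integral_add (hInt p.1 hθΘ p.2) (integrable_const K), integral_const]
      simp [measure_univ, hfpval]
    have e2 : ∀ n, ENNReal.ofReal ((f (Q n) + (Q n).2) + K)
        = ∫⁻ z, ENNReal.ofReal (legendre Φ (G (Q n).1 z + (Q n).2) + K) ∂μZ := by
      intro n
      have hin : Integrable (fun z => legendre Φ (G (Q n).1 z + (Q n).2) + K) μZ :=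
        (hInt _ (hQΘ n) _).add (integrable_const K)
      rw [← ofReal_integral_eq_lintegral_ofReal hin
        (Filter.Eventually.of_forall (hg_nonneg (Q n).1 (Q n).2))]
      congr 1
      rw [integral_add (hInt _ (hQΘ n) _) (integrable_const K), integral_const]
      simp [measure_univ, hfval (Q n) (hQΘ n)]
    have e3 : ∀ n, (∫⁻ z, ENNReal.ofReal (legendre Φ (G (Q n).1 z + (Q n).2) + K) ∂μZ)
        ≤ ENNReal.ofReal ((c + (Q n).2) + K) := by
      intro n
      rw [← e2 n]
      exact ENNReal.ofReal_le_ofReal (by have := hQc n; linarith)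
    have e4 : Filter.liminf
        (fun n => ∫⁻ z, ENNReal.ofReal (legendre Φ (G (Q n).1 z + (Q n).2) + K) ∂μZ) atTop
        ≤ ENNReal.ofReal ((c + p.2) + K) := by
      have ht : Tendsto (fun n => ENNReal.ofReal ((c + (Q n).2) + K)) atTop
          (𝓝 (ENNReal.ofReal ((c + p.2) + K))) :=
        ENNReal.tendsto_ofReal (((tendsto_const_nhds (x := c)).add hxt).add tendsto_const_nhds)
      calc Filter.liminf _ atTop
          ≤ Filter.liminf (fun n => ENNReal.ofReal ((c + (Q n).2) + K)) atTop :=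
            Filter.liminf_le_liminf (Filter.Eventually.of_forall e3)
        _ = _ := ht.liminf_eq
    have e5 : ENNReal.ofReal ((f p + p.2) + K) ≤ Filter.liminf
        (fun n => ∫⁻ z, ENNReal.ofReal (legendre Φ (G (Q n).1 z + (Q n).2) + K) ∂μZ) atTop := by
      rw [e1]
      calc (∫⁻ z, ENNReal.ofReal (legendre Φ (G p.1 z + p.2) + K) ∂μZ)
          ≤ ∫⁻ z, Filter.liminf
              (fun n => ENNReal.ofReal (legendre Φ (G (Q n).1 z + (Q n).2) + K)) atTop ∂μZ :=
            lintegral_mono hpoint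
        _ ≤ _ := lintegral_liminf_le hFnmeas
    have hle := e5.trans e4
    have hlt : ENNReal.ofReal ((c + p.2) + K) < ENNReal.ofReal ((f p + p.2) + K) :=
      (ENNReal.ofReal_lt_ofReal_iff (by linarith)).2 (by linarith)
    exact absurd hle hlt.not_ge
  -- Coercivity and minimizers
  obtain ⟨x₀', hx₀1, hx₀fin⟩ := hΦ.finite_gt_one
  have hx₀pos : (0:ℝ) < x₀' := lt_trans one_pos hx₀1
  obtain ⟨θ₀, hθ₀⟩ := hΘne
  set C0 : ℝ := (Φ 0).toReal with hC0
  set C1 : ℝ := (Φ x₀').toReal with hC1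
  set I1 : ℝ := ∫ z, ξ₁ z ∂μZ with hI1
  set M : ℝ := f (θ₀, 0) with hM
  have hlow1 : ∀ θ' ∈ Θ, ∀ x' : ℝ, (x₀' - 1) * x' - x₀' * I1 - C1 ≤ f (θ', x') := by
    intro θ' hθ' x'
    have hpt : ∀ z, x₀' * x' - x₀' * ξ₁ z - C1 ≤ legendre Φ (G θ' z + x') := by
      intro z
      have h1 := hΦ.le_legendre (y := G θ' z + x') hx₀pos.le hx₀fin
      have h2 : -ξ₁ z ≤ G θ' z := (abs_le.1 (hA2 θ' hθ' z)).1
      nlinarith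
    have hint0 : Integrable (fun z => x₀' * x' - x₀' * ξ₁ z) μZ :=
      (integrable_const (x₀' * x')).sub (hξ₁.const_mul x₀')
    have hint1 : Integrable (fun z => x₀' * x' - x₀' * ξ₁ z - C1) μZ :=
      hint0.sub (integrable_const C1)
    have hmono := integral_mono hint1 (hInt θ' hθ' x') hpt
    have hL : ∫ z, (x₀' * x' - x₀' * ξ₁ z - C1) ∂μZ = x₀' * x' - x₀' * I1 - C1 := by
      rw [integral_sub hint0 (integrable_const C1),
        integral_sub (integrable_const (x₀' * x')) (hξ₁.const_mul x₀'),
        integral_const, integral_const, integral_const_mul]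
      simp [measure_univ, hI1]
    rw [hL] at hmono
    rw [hfval (θ', x') hθ']
    simp only at hmono ⊢
    linarith
  have hlow2 : ∀ θ' ∈ Θ, ∀ x' : ℝ, -C0 - x' ≤ f (θ', x') := by
    intro θ' hθ' x'
    have hpt : ∀ z, -C0 ≤ legendre Φ (G θ' z + x') := fun z => hΦ.neg_le_legendre _
    have hmono := integral_mono (integrable_const (-C0)) (hInt θ' hθ' x') hpt
    rw [integral_const] at hmono
    simp [measure_univ] at hmono
    rw [hfval (θ', x') hθ']
    simp only
    linarith
  set R : ℝ := max (max ((M + x₀' * I1 + C1 + 1) / (x₀' - 1)) (M + C0 + 1)) 0 with hR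
  have hR0 : (0:ℝ) ≤ R := le_max_right _ _
  have hcoer : ∀ θ' ∈ Θ, ∀ x' : ℝ, R < |x'| → M < f (θ', x') := by
    intro θ' hθ' x' hx'
    rcases abs_cases x' with ⟨habs, hsign⟩ | ⟨habs, hsign⟩
    · have hgt : (M + x₀' * I1 + C1 + 1) / (x₀' - 1) < x' := by
        have : (M + x₀' * I1 + C1 + 1) / (x₀' - 1) ≤ R :=
          le_trans (le_max_left _ _) (le_max_left _ _)
        rw [habs] at hx'; linarith
      have hpos : (0:ℝ) < x₀' - 1 := by linarith
      have : M + x₀' * I1 + C1 + 1 < (x₀' - 1) * x' := by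
        rw [div_lt_iff₀ hpos] at hgt; linarith [hgt]
      have := hlow1 θ' hθ' x'
      linarith
    · have hgt : M + C0 + 1 < -x' := by
        have : M + C0 + 1 ≤ R := le_trans (le_max_right _ _) (le_max_left _ _)
        rw [habs] at hx'; linarith
      have := hlow2 θ' hθ' x'
      linarith
  set Kc : Set (EuclideanSpace ℝ (Fin m) × ℝ) := Θ ×ˢ Set.Icc (-R) R with hKc
  have hKcomp : IsCompact Kc := hΘc.prod isCompact_Icc
  have hKne : Kc.Nonempty := ⟨(θ₀, 0), ⟨hθ₀, Set.mem_Icc.mpr ⟨by simpa using neg_nonpos.mpr hR0, by simpa using hR0⟩⟩⟩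
  have hKsub : Kc ⊆ s := fun q hq => ⟨hq.1, trivial⟩
  obtain ⟨pstar, hpK, hpmin⟩ := lsc_exists_min hKcomp hKne (hlsc.mono hKsub)
  have hpΘ : pstar.1 ∈ Θ := hpK.1
  have hMmem : (θ₀, (0:ℝ)) ∈ Kc := ⟨hθ₀, Set.mem_Icc.mpr ⟨by simpa using neg_nonpos.mpr hR0, by simpa using hR0⟩⟩
  have hMle : f pstar ≤ M := hpmin (θ₀, 0) hMmem
  have hglobal : ∀ θ' ∈ Θ, ∀ x' : ℝ, f pstar ≤ f (θ', x') := by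
    intro θ' hθ' x'
    rcases le_or_gt |x'| R with h | h
    · exact hpmin (θ', x') ⟨hθ', by rw [Set.mem_Icc]; exact abs_le.1 h⟩
    · exact le_trans hMle (hcoer θ' hθ' x' h).le
  have hSmem : pstar ∈ SbarSet Φ μZ G Θ := ⟨hpΘ, fun θ' hθ' x' => hglobal θ' hθ' x'⟩
  have hSsub : SbarSet Φ μZ G Θ ⊆ Kc := by
    rintro p ⟨hp1, hp2⟩
    refine ⟨hp1, ?_⟩
    by_contra hcon
    have habs : R < |p.2| := by
      rw [Set.mem_Icc] at hcon
      push_neg at hcon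
      rcases le_or_gt (-R) p.2 with h | h
      · exact lt_of_lt_of_le (hcon h) (le_abs_self _)
      · calc R < -p.2 := by linarith
          _ ≤ |p.2| := neg_le_abs _
    have h1 : f p ≤ f (θ₀, 0) := hp2 θ₀ hθ₀ 0
    have h2 : M < f p := by
      have := hcoer p.1 hp1 p.2 habs
      simpa using this
    rw [← hM] at h1
    linarith
  have hSclosed : IsClosed (SbarSet Φ μZ G Θ) := by
    refine isClosed_of_closure_subset fun p hp => ?_
    have hpK2 : p ∈ Kc := by
      have := closure_mono hSsub
      rw [hKcomp.isClosed.closure_eq] at this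
      exact this hp
    refine ⟨hpK2.1, ?_⟩
    intro θ' hθ' x'
    by_contra hcon2
    push_neg at hcon2
    have hlscp := hlsc p (hKsub hpK2) _ hcon2
    have hne2 : (𝓝[SbarSet Φ μZ G Θ] p).NeBot := mem_closure_iff_nhdsWithin_neBot.1 hp
    have hev : ∀ᶠ q in 𝓝[SbarSet Φ μZ G Θ] p,
        (∫ z, (legendre Φ (G θ' z + x') - x') ∂μZ) < f q :=
      hlscp.filter_mono (nhdsWithin_mono p (hSsub.trans hKsub))
    obtain ⟨q, hq1, hq2⟩ := (hev.and eventually_mem_nhdsWithin).exists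
    exact absurd hq1 (not_lt.2 (hq2.2 θ' hθ' x'))
  exact ⟨hlsc, ⟨pstar, hSmem⟩, hKcomp.of_isClosed_subset hSclosed hSsub⟩
end
end

section
/- For every n ∈ ℕ and all y₁,…,y_n ∈ ℝ, the set of minimizers over x ∈ ℝ of the mapping x ↦ (1/n) Σ_{j=1}^n (Φ*(y_j + x) − x) is a nonvoid compact interval in ℝ. -/
open MeasureTheory Filter Topology Set
open scoped ENNReal NNReal

noncomputable section

namespace LegendreAux

variable {Φ : ℝ → ℝ≥0∞}

lemma set_nonempty (hΦ : PhiAssumptions Φ) (y : ℝ) :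
    {s : ℝ | ∃ x : ℝ, 0 ≤ x ∧ Φ x ≠ ⊤ ∧ s = x * y - (Φ x).toReal}.Nonempty :=
  ⟨0 * y - (Φ 0).toReal, 0, le_refl 0, hΦ.finite_zero, rfl⟩

lemma set_bddAbove (hΦ : PhiAssumptions Φ) (y : ℝ) :
    BddAbove {s : ℝ | ∃ x : ℝ, 0 ≤ x ∧ Φ x ≠ ⊤ ∧ s = x * y - (Φ x).toReal} := by
  have h : ∀ᶠ x in atTop, Φ x / ENNReal.ofReal x ∈ Ioi (ENNReal.ofReal (max y 0)) :=
    hΦ.superlinear (Ioi_mem_nhds ENNReal.ofReal_lt_top)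
  obtain ⟨M, hM⟩ := eventually_atTop.1 h
  refine ⟨max 0 ((max M 1) * |y|), ?_⟩
  rintro s ⟨x, hx, hfin, rfl⟩
  rcases le_or_gt x (max M 1) with hxM | hxM
  · refine le_trans ?_ (le_max_right _ _)
    have : x * y ≤ (max M 1) * |y| := by
      calc x * y ≤ x * |y| := mul_le_mul_of_nonneg_left (le_abs_self y) hx
        _ ≤ (max M 1) * |y| := mul_le_mul_of_nonneg_right hxM (abs_nonneg y)
    have h0 : 0 ≤ (Φ x).toReal := ENNReal.toReal_nonneg
    linarith
  · have hx1 : (1:ℝ) ≤ x := le_of_lt (lt_of_le_of_lt (le_max_right M 1) hxM)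
    have hxp : 0 < x := lt_of_lt_of_le one_pos hx1
    have hMx : ENNReal.ofReal (max y 0) < Φ x / ENNReal.ofReal x :=
      hM x (le_of_lt (lt_of_le_of_lt (le_max_left M 1) hxM))
    have hlt : ENNReal.ofReal (max y 0) * ENNReal.ofReal x < Φ x := by
      rw [ENNReal.lt_div_iff_mul_lt (Or.inl (by simp [hxp.ne'] ; positivity))
        (Or.inl ENNReal.ofReal_ne_top)] at hMx
      exact hMx
    have hle : ENNReal.ofReal (max y 0 * x) ≤ Φ x := by
      rw [ENNReal.ofReal_mul (le_max_right y 0)]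
      exact hlt.le
    have htr : max y 0 * x ≤ (Φ x).toReal := by
      rw [← ENNReal.ofReal_le_iff_le_toReal hfin] at *
      exact hle
    have hxy : x * y ≤ max y 0 * x := by
      rw [mul_comm (max y 0) x]
      exact mul_le_mul_of_nonneg_left (le_max_left y 0) hx
    refine le_trans ?_ (le_max_left _ _)
    linarith

lemma le_legendre (hΦ : PhiAssumptions Φ) {x : ℝ} (hx : 0 ≤ x) (hfin : Φ x ≠ ⊤) (y : ℝ) :
    x * y - (Φ x).toReal ≤ legendre Φ y :=
  le_csSup (set_bddAbove hΦ y) ⟨x, hx, hfin, rfl⟩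

lemma legendre_convexOn (hΦ : PhiAssumptions Φ) : ConvexOn ℝ univ (legendre Φ) := by
  refine ⟨convex_univ, fun y₁ _ y₂ _ u v hu hv huv => ?_⟩
  simp only [smul_eq_mul]
  refine csSup_le (set_nonempty hΦ _) ?_
  rintro s ⟨x, hx, hfin, rfl⟩
  have h1 := mul_le_mul_of_nonneg_left (le_legendre hΦ hx hfin y₁) hu
  have h2 := mul_le_mul_of_nonneg_left (le_legendre hΦ hx hfin y₂) hv
  have key : x * (u * y₁ + v * y₂) - (Φ x).toReal
      = u * (x * y₁ - (Φ x).toReal) + v * (x * y₂ - (Φ x).toReal) := by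
    linear_combination ((Φ x).toReal) * huv
  rw [key]
  linarith

lemma legendre_continuous (hΦ : PhiAssumptions Φ) : Continuous (legendre Φ) :=
  (legendre_convexOn hΦ).locallyLipschitz.continuous

end LegendreAux

/-- For every `n ≥ 1` and `y₁,…,y_n ∈ ℝ`, the set of minimizers of
`x ↦ (1/n) ∑_j (Φ*(y_j + x) - x)` is a nonvoid compact interval. -/
theorem minimizers_nonvoid_compact_interval
    (Φ : ℝ → ℝ≥0∞) (hΦ : PhiAssumptions Φ)
    (n : ℕ) (hn : 0 < n) (y : Fin n → ℝ) :
    ∃ c c' : ℝ, c ≤ c' ∧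
      {x : ℝ | ∀ x' : ℝ,
          (n : ℝ)⁻¹ * ∑ j, (legendre Φ (y j + x) - x) ≤
            (n : ℝ)⁻¹ * ∑ j, (legendre Φ (y j + x') - x')} = Set.Icc c c' := by
  classical
  set g : ℝ → ℝ := legendre Φ with hg
  set G : ℝ → ℝ := fun x => ∑ j, (g (y j + x) - x) with hGdef
  have hnR : (0:ℝ) < n := Nat.cast_pos.mpr hn
  -- continuity of G
  have hgcont : Continuous g := LegendreAux.legendre_continuous hΦ
  have hGcont : Continuous G := by
    apply continuous_finset_sum
    intro j _
    exact (hgcont.comp (continuous_const.add continuous_id)).sub continuous_id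
  -- convexity inequality for G
  have hGconv : ∀ a b u v : ℝ, 0 ≤ u → 0 ≤ v → u + v = 1 →
      G (u * a + v * b) ≤ u * G a + v * G b := by
    intro a b u v hu hv huv
    have hterm : ∀ j : Fin n,
        g (y j + (u * a + v * b)) - (u * a + v * b)
          ≤ u * (g (y j + a) - a) + v * (g (y j + b) - b) := by
      intro j
      have hc := (LegendreAux.legendre_convexOn hΦ).2 (mem_univ (y j + a)) (mem_univ (y j + b))
        hu hv huv
      simp only [smul_eq_mul] at hc
      have harg : u * (y j + a) + v * (y j + b) = y j + (u * a + v * b) := by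
        linear_combination (y j) * huv
      rw [harg] at hc
      have : g (y j + (u * a + v * b)) ≤ u * g (y j + a) + v * g (y j + b) := hc
      linarith [this]
    calc G (u * a + v * b) ≤ ∑ j, (u * (g (y j + a) - a) + v * (g (y j + b) - b)) :=
          Finset.sum_le_sum fun j _ => hterm j
      _ = u * G a + v * G b := by
          rw [Finset.sum_add_distrib, ← Finset.mul_sum, ← Finset.mul_sum]
  -- lower bounds for G
  obtain ⟨x₀, hx₀1, hx₀fin⟩ := hΦ.finite_gt_one
  set c0 : ℝ := (Φ 0).toReal
  set c1 : ℝ := (Φ x₀).toReal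
  set S : ℝ := ∑ j, y j
  have hL1 : ∀ x : ℝ, (n:ℝ) * (-c0 - x) ≤ G x := by
    intro x
    have : ∀ j : Fin n, -c0 - x ≤ g (y j + x) - x := by
      intro j
      have := LegendreAux.le_legendre hΦ (le_refl (0:ℝ)) hΦ.finite_zero (y j + x)
      simp only [zero_mul, zero_sub] at this
      linarith
    calc (n:ℝ) * (-c0 - x) = ∑ _j : Fin n, (-c0 - x) := by
          rw [Finset.sum_const, Finset.card_univ, Fintype.card_fin, nsmul_eq_mul]
      _ ≤ G x := Finset.sum_le_sum fun j _ => this j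
  have hL2 : ∀ x : ℝ, x₀ * S + (n:ℝ) * ((x₀ - 1) * x - c1) ≤ G x := by
    intro x
    have hx₀0 : (0:ℝ) ≤ x₀ := le_of_lt (lt_trans one_pos hx₀1)
    have : ∀ j : Fin n, x₀ * (y j + x) - c1 - x ≤ g (y j + x) - x := by
      intro j
      have := LegendreAux.le_legendre hΦ hx₀0 hx₀fin (y j + x)
      linarith
    calc x₀ * S + (n:ℝ) * ((x₀ - 1) * x - c1)
        = ∑ j : Fin n, (x₀ * (y j + x) - c1 - x) := by
          rw [Finset.sum_sub_distrib, Finset.sum_sub_distrib]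
          simp only [Finset.sum_const, Finset.card_univ, Fintype.card_fin, nsmul_eq_mul,
            ← Finset.mul_sum, Finset.sum_add_distrib]
          ring
      _ ≤ G x := Finset.sum_le_sum fun j _ => this j
  -- choose R and show G x' > G 0 outside [-R, R]
  set R : ℝ := max (max ((G 0) / n + c0 + 1) (((G 0 - x₀ * S) / n + c1 + 1) / (x₀ - 1))) 1
  have hR1 : (1:ℝ) ≤ R := le_max_right _ _
  have hRpos : (0:ℝ) < R := lt_of_lt_of_le one_pos hR1
  have houtside : ∀ x : ℝ, x ∉ Icc (-R) R → G 0 < G x := by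
    intro x hx
    rw [mem_Icc, not_and_or, not_le, not_le] at hx
    rcases hx with hx | hx
    · -- x < -R
      have hRa : (G 0) / n + c0 + 1 ≤ R := le_trans (le_max_left _ _) (le_max_left _ _)
      have h1 := hL1 x
      have : (G 0) / n + 1 ≤ -c0 - x := by linarith
      have h2 : (n:ℝ) * ((G 0) / n + 1) ≤ (n:ℝ) * (-c0 - x) :=
        mul_le_mul_of_nonneg_left this (le_of_lt hnR)
      have h3 : (n:ℝ) * ((G 0) / n + 1) = G 0 + n := by
        field_simp
      nlinarith
    · -- R < x
      have hRb : ((G 0 - x₀ * S) / n + c1 + 1) / (x₀ - 1) ≤ R :=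
        le_trans (le_max_right _ _) (le_max_left _ _)
      have hx₀m : (0:ℝ) < x₀ - 1 := by linarith
      have h1 := hL2 x
      have h2 : (G 0 - x₀ * S) / n + c1 + 1 ≤ (x₀ - 1) * x := by
        rw [div_le_iff₀ hx₀m] at hRb
        calc (G 0 - x₀ * S) / n + c1 + 1 ≤ R * (x₀ - 1) := hRb
          _ ≤ x * (x₀ - 1) := mul_le_mul_of_nonneg_right (le_of_lt hx) (le_of_lt hx₀m)
          _ = (x₀ - 1) * x := mul_comm _ _
      have h3 : (n:ℝ) * ((G 0 - x₀ * S) / n + c1 + 1 - c1) ≤ (n:ℝ) * ((x₀ - 1) * x - c1) :=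
        mul_le_mul_of_nonneg_left (by linarith) (le_of_lt hnR)
      have h4 : (n:ℝ) * ((G 0 - x₀ * S) / n) = G 0 - x₀ * S := by
        field_simp
      nlinarith
  -- minimizer exists
  obtain ⟨z, hzK, hzmin⟩ := isCompact_Icc.exists_isMinOn
    (nonempty_Icc.mpr (by linarith : -R ≤ R)) hGcont.continuousOn (s := Icc (-R) R)
  have hzglobal : ∀ x' : ℝ, G z ≤ G x' := by
    intro x'
    by_cases hx' : x' ∈ Icc (-R) R
    · exact hzmin hx'
    · have h0K : (0:ℝ) ∈ Icc (-R) R := by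
        rw [mem_Icc]; constructor <;> linarith
      exact le_of_lt (lt_of_le_of_lt (hzmin h0K) (houtside x' hx'))
  -- the minimizer set
  set Smin : Set ℝ := {x : ℝ | ∀ x' : ℝ, G x ≤ G x'} with hSmin
  have hzS : z ∈ Smin := hzglobal
  have hSconv : Convex ℝ Smin := by
    intro a ha b hb u v hu hv huv
    intro x'
    simp only [smul_eq_mul]
    calc G (u * a + v * b) ≤ u * G a + v * G b := hGconv a b u v hu hv huv
      _ ≤ u * G x' + v * G x' := add_le_add
          (mul_le_mul_of_nonneg_left (ha x') hu) (mul_le_mul_of_nonneg_left (hb x') hv)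
      _ = G x' := by linear_combination (G x') * huv
  have hSclosed : IsClosed Smin := by
    have : Smin = ⋂ x' : ℝ, {x : ℝ | G x ≤ G x'} := by
      ext x; simp [hSmin, mem_iInter]
    rw [this]
    exact isClosed_iInter fun x' => isClosed_le hGcont continuous_const
  have hSsub : Smin ⊆ Icc (-R) R := by
    intro x hx
    by_contra hmem
    exact absurd (hx 0) (not_le.mpr (houtside x hmem))
  have hScompact : IsCompact Smin := isCompact_Icc.of_isClosed_subset hSclosed hSsub
  have hSconn : IsConnected Smin := ⟨⟨z, hzS⟩, hSconv.isPreconnected⟩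
  have hIcc := eq_Icc_of_connected_compact hSconn hScompact
  refine ⟨sInf Smin, sSup Smin, ?_, ?_⟩
  · exact csInf_le_csSup ⟨z, hzS⟩ hScompact.bddBelow hScompact.bddAbove
  · rw [← hIcc]
    ext x
    simp only [mem_setOf_eq, hSmin]
    constructor
    · intro h x'
      have := h x'
      rwa [mul_le_mul_iff_of_pos_left (by positivity : (0:ℝ) < (n:ℝ)⁻¹)] at this
    · intro h x'
      exact mul_le_mul_of_nonneg_left (h x') (by positivity)
end
end
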